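/- arXiv:2009.10671 — 3 statements merged into one kernel-verified Lean document; each statement's English description precedes it below -/
import Mathlib

section
/- For every ordered graph H and every ε>0 there exists δ>0 such that for every H-free ordered graph G, there exists X ⊆ V(G) with |X| ≥ δ|G| such that in one of G[X], the complement of G[X], every vertex of X has degree less than ε|X|. -/
/-- The max-degree from `X` to `Y`: the maximum over `v ∈ X` of the number of
neighbours of `v` in `Y` (0 if `X` is empty). -/
noncomputable def maxDegFrom {V : Type} (G : SimpleGraph V) (X Y : Set V) : ℕ :=
  sSup ((fun v => (G.neighborSet v ∩ Y).ncard) '' X)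

/-- `X` is anticomplete to `Y`: there are no edges between them. -/
def AnticompSets {V : Type} (G : SimpleGraph V) (X Y : Set V) : Prop :=
  ∀ x ∈ X, ∀ y ∈ Y, ¬ G.Adj x y

/-- A pure pair: disjoint sets, complete or anticomplete to each other. -/
def PurePair {V : Type} (G : SimpleGraph V) (Z1 Z2 : Set V) : Prop :=
  Disjoint Z1 Z2 ∧ ((∀ x ∈ Z1, ∀ y ∈ Z2, G.Adj x y) ∨ AnticompSets G Z1 Z2)

/-- `X` covers `B`: every vertex of `B` has a neighbour in `X`. -/
def CoversSet {V : Type} (G : SimpleGraph V) (X B : Set V) : Prop :=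
  ∀ v ∈ B, ∃ x ∈ X, G.Adj x v

/-- `G` contains `H` as an induced subgraph. -/
def GraphContains {V W : Type} (G : SimpleGraph V) (H : SimpleGraph W) : Prop :=
  ∃ f : W → V, Function.Injective f ∧ ∀ a b : W, G.Adj (f a) (f b) ↔ H.Adj a b

/-- The ordered graph `G` contains the ordered graph `H`: an order-preserving
induced-subgraph embedding. -/
def OrdGraphContains {V W : Type} [LinearOrder V] [LinearOrder W]
    (G : SimpleGraph V) (H : SimpleGraph W) : Prop :=
  ∃ f : W → V, StrictMono f ∧ ∀ a b : W, G.Adj (f a) (f b) ↔ H.Adj a b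

/-- A blockade: a family of pairwise disjoint nonempty vertex subsets indexed by
a finite set of integers. -/
def IsBlockade {V : Type} (I : Finset ℤ) (B : ℤ → Set V) : Prop :=
  (∀ i ∈ I, (B i).Nonempty) ∧ ∀ i ∈ I, ∀ j ∈ I, i ≠ j → Disjoint (B i) (B j)

/-- A blockade in an ordered graph: additionally the blocks are intervals
numbered in order. -/
def IsOrdBlockade {V : Type} [LinearOrder V] (I : Finset ℤ) (B : ℤ → Set V) : Prop :=
  IsBlockade I B ∧ ∀ i ∈ I, ∀ j ∈ I, i < j → ∀ u ∈ B i, ∀ v ∈ B j, u < v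

/-- The blockade `(B i : i ∈ I)` has width at least `w`
(the width being the minimum cardinality of a block, `|G|` if `I = ∅`). -/
def WidthGE {V : Type} [Fintype V] (I : Finset ℤ) (B : ℤ → Set V) (w : ℝ) : Prop :=
  (∀ i ∈ I, w ≤ ((B i).ncard : ℝ)) ∧ w ≤ (Fintype.card V : ℝ)

/-- The width of a blockade: the minimum cardinality of a block (`|G|` if `I = ∅`). -/
noncomputable def blockadeWidth {V : Type} [Fintype V] (I : Finset ℤ) (B : ℤ → Set V) : ℕ :=
  if h : I.Nonempty then I.inf' h (fun i => (B i).ncard) else Fintype.card V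

/-- The blockade has shrinkage at most `s`: its width is at least `|G|^(1-s)`. -/
def ShrinkageLE {V : Type} [Fintype V] (I : Finset ℤ) (B : ℤ → Set V) (s : ℝ) : Prop :=
  WidthGE I B ((Fintype.card V : ℝ) ^ ((1 : ℝ) - s))

/-- The blockade has linkage at most `lam`: for all distinct `i, j`, the
max-degree from `B i` to `B j` is at most `lam * |B j|`. -/
def LinkageLE {V : Type} (G : SimpleGraph V) (I : Finset ℤ) (B : ℤ → Set V) (lam : ℝ) : Prop :=
  ∀ i ∈ I, ∀ j ∈ I, i ≠ j → (maxDegFrom G (B i) (B j) : ℝ) ≤ lam * ((B j).ncard : ℝ)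

/-- The blockade is `(phi, mu)`-shrink-resistant. -/
def ShrinkResistant {V : Type} [Fintype V] (G : SimpleGraph V) (I : Finset ℤ)
    (B : ℤ → Set V) (phi mu : ℝ) : Prop :=
  ∀ h ∈ I, ∀ j ∈ I, h ≠ j → ∀ X ⊆ B h, ∀ Y ⊆ B j,
    mu * ((B h).ncard : ℝ) ≤ (X.ncard : ℝ) → mu * ((B j).ncard : ℝ) ≤ (Y.ncard : ℝ) →
    (maxDegFrom G (B h) (B j) : ℝ) * (Fintype.card V : ℝ) ^ (-phi) < (maxDegFrom G X Y : ℝ)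

/-- `tau` is a `(phi, mu)`-band for the blockade `(B i : i ∈ I)`. -/
def IsBand {V : Type} [Fintype V] (G : SimpleGraph V) (I : Finset ℤ)
    (B : ℤ → Set V) (tau phi mu : ℝ) : Prop :=
  ∀ h ∈ I, ∀ j ∈ I, h ≠ j →
    ((maxDegFrom G (B h) (B j) : ℝ) ≤ tau * ((B j).ncard : ℝ)) ∧
    ∀ X ⊆ B h, ∀ Y ⊆ B j,
      mu * ((B h).ncard : ℝ) ≤ (X.ncard : ℝ) → mu * ((B j).ncard : ℝ) ≤ (Y.ncard : ℝ) →
      tau * (Fintype.card V : ℝ) ^ (-phi) * ((B j).ncard : ℝ) < (maxDegFrom G X Y : ℝ)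

/-- There do not exist disjoint anticomplete sets both of size at least `|G|^(1-c)`. -/
def NoBigAnticomp {V : Type} [Fintype V] (G : SimpleGraph V) (c : ℝ) : Prop :=
  ¬ ∃ Z1 Z2 : Set V, Disjoint Z1 Z2 ∧ AnticompSets G Z1 Z2 ∧
      (Fintype.card V : ℝ) ^ ((1 : ℝ) - c) ≤ (Z1.ncard : ℝ) ∧
      (Fintype.card V : ℝ) ^ ((1 : ℝ) - c) ≤ (Z2.ncard : ℝ)

/-- The blockade `(B i : i ∈ H ∪ I ∪ J)` is leaf-covered with partition `(H, I, J)`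
and parameters `w, W, lam, phi, mu, tau`. -/
def LeafCovered {V : Type} [Fintype V] (G : SimpleGraph V) (H I J : Finset ℤ)
    (B : ℤ → Set V) (w W lam phi mu tau : ℝ) : Prop :=
  WidthGE H B w ∧ LinkageLE G H B lam ∧ WidthGE I B W ∧
  (∀ h ∈ H, ∀ j ∈ J, ∃ X ⊆ B j, CoversSet G X (B h) ∧
      ∀ i ∈ (H ∪ I).erase h, AnticompSets G X (B i)) ∧
  IsBand G (I ∪ J) B tau phi mu ∧
  (∀ h ∈ H, ∀ i ∈ I ∪ J, (maxDegFrom G (B h) (B i) : ℝ) ≤ tau * ((B i).ncard : ℝ))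

/-- The clique number of a graph. -/
noncomputable def cliqueNumber {V : Type} (G : SimpleGraph V) : ℕ :=
  sSup {n | ∃ s : Finset V, G.IsNClique n s}

open scoped Classical

open Finset

/-- Degree of `v` into a finset `B`. -/
noncomputable def degF {V : Type} (G : SimpleGraph V) (v : V) (B : Finset V) : ℕ :=
  (B.filter (fun u => G.Adj v u)).card

/-- Nonneighbour count of `v` in `B`. -/
noncomputable def ndegF {V : Type} (G : SimpleGraph V) (v : V) (B : Finset V) : ℕ :=
  (B.filter (fun u => ¬ G.Adj v u)).card

section Helpers
variable {V : Type} (G : SimpleGraph V)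

lemma degF_le_card (v : V) (B : Finset V) : degF G v B ≤ B.card :=
  Finset.card_filter_le B _

lemma degF_add_ndegF (v : V) (B : Finset V) : degF G v B + ndegF G v B = B.card :=
  Finset.card_filter_add_card_filter_not _

lemma degF_mono (v : V) {B B' : Finset V} (h : B' ⊆ B) : degF G v B' ≤ degF G v B :=
  Finset.card_le_card (Finset.filter_subset_filter _ h)

lemma ndegF_mono (v : V) {B B' : Finset V} (h : B' ⊆ B) : ndegF G v B' ≤ ndegF G v B :=
  Finset.card_le_card (Finset.filter_subset_filter _ h)

lemma degF_sub_le (v : V) {B B' : Finset V} (h : B' ⊆ B) :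
    degF G v B ≤ degF G v B' + (B.card - B'.card) := by
  have h1 : B.filter (fun u => G.Adj v u) ⊆ B'.filter (fun u => G.Adj v u) ∪ (B \ B') := by
    intro x hx
    simp only [mem_filter, mem_union, mem_sdiff] at *
    by_cases hx' : x ∈ B'
    · exact Or.inl ⟨hx', hx.2⟩
    · exact Or.inr ⟨hx.1, hx'⟩
  calc degF G v B ≤ (B'.filter (fun u => G.Adj v u) ∪ (B \ B')).card :=
        Finset.card_le_card h1
    _ ≤ degF G v B' + (B \ B').card := Finset.card_union_le _ _
    _ = degF G v B' + (B.card - B'.card) := by rw [Finset.card_sdiff_of_subset h]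

/-- `degF` in the complement graph. -/
lemma degF_compl (v : V) (B : Finset V) (hv : v ∉ B) : degF Gᶜ v B = ndegF G v B := by
  unfold degF ndegF
  congr 1
  ext u
  simp only [mem_filter, SimpleGraph.compl_adj]
  constructor
  · rintro ⟨hu, _, h⟩; exact ⟨hu, h⟩
  · rintro ⟨hu, h⟩; exact ⟨hu, fun he => hv (he ▸ hu), h⟩

/-- Double counting: sum of degrees from `A` into `B` equals from `B` into `A`. -/
lemma sum_degF_comm (A B : Finset V) :
    ∑ v ∈ A, degF G v B = ∑ u ∈ B, degF G u A := by
  unfold degF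
  simp only [Finset.card_filter]
  rw [Finset.sum_comm]
  apply Finset.sum_congr rfl
  intro u _
  apply Finset.sum_congr rfl
  intro v _
  by_cases h : G.Adj v u <;> simp [h, G.adj_comm u v, h]

lemma degF_biUnion_le {ι : Type} [DecidableEq ι] (s : Finset ι) (f : ι → Finset V) (v : V) :
    degF G v (s.biUnion f) ≤ ∑ i ∈ s, degF G v (f i) := by
  unfold degF
  rw [Finset.filter_biUnion]
  exact Finset.card_biUnion_le

end Helpers

section Split
variable {V : Type} [LinearOrder V]

/-- One can pick the `q` smallest elements of a finset. -/
lemma exists_bottom (Y : Finset V) (q : ℕ) (hq : q ≤ Y.card) :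
    ∃ Z ⊆ Y, Z.card = q ∧ ∀ z ∈ Z, ∀ y ∈ Y \ Z, z < y := by
  induction q generalizing Y with
  | zero => exact ⟨∅, empty_subset _, rfl, by simp⟩
  | succ q ih =>
    have hne : Y.Nonempty := Finset.card_pos.mp (by omega)
    set z₀ := Y.min' hne with hz₀
    have hz₀Y : z₀ ∈ Y := Y.min'_mem hne
    have hcard : q ≤ (Y.erase z₀).card := by
      rw [Finset.card_erase_of_mem hz₀Y]; omega
    obtain ⟨Z', hZ'sub, hZ'card, hZ'ord⟩ := ih (Y.erase z₀) hcard
    refine ⟨insert z₀ Z', ?_, ?_, ?_⟩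
    · intro x hx
      rcases Finset.mem_insert.mp hx with rfl | hx
      · exact hz₀Y
      · exact Finset.erase_subset _ _ (hZ'sub hx)
    · rw [Finset.card_insert_of_notMem (fun h => (Finset.mem_erase.mp (hZ'sub h)).1 rfl),
        hZ'card]
    · intro z hz y hy
      have hyY : y ∈ Y := (Finset.mem_sdiff.mp hy).1
      have hynot : y ∉ insert z₀ Z' := (Finset.mem_sdiff.mp hy).2
      have hyne : y ≠ z₀ := fun h => hynot (h ▸ Finset.mem_insert_self _ _)
      rcases Finset.mem_insert.mp hz with rfl | hz
      · exact lt_of_le_of_ne (Y.min'_le y hyY) (fun h => hyne h.symm)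
      · refine hZ'ord z hz y ?_
        rw [Finset.mem_sdiff]
        exact ⟨Finset.mem_erase.mpr ⟨hyne, hyY⟩, fun h => hynot (Finset.mem_insert_of_mem h)⟩

/-- Split `Y` into `k` ordered blocks of size exactly `q` each. -/
lemma exists_split (k : ℕ) : ∀ (Y : Finset V) (q : ℕ), q * k ≤ Y.card →
    ∃ I : ℕ → Finset V, (∀ t, t < k → I t ⊆ Y ∧ (I t).card = q) ∧
      (∀ s t, s < t → t < k → ∀ u ∈ I s, ∀ x ∈ I t, u < x) := by
  induction k with
  | zero => exact fun Y q _ => ⟨fun _ => ∅, fun t ht => absurd ht (by omega), by omega⟩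
  | succ k ih =>
    intro Y q hq
    obtain ⟨Z, hZsub, hZcard, hZord⟩ := exists_bottom Y q (by nlinarith)
    have hrest : q * k ≤ (Y \ Z).card := by
      rw [Finset.card_sdiff_of_subset hZsub, hZcard]
      have : q * (k+1) = q + q * k := by ring
      omega
    obtain ⟨I', hI'1, hI'2⟩ := ih (Y \ Z) q hrest
    refine ⟨fun t => if t = 0 then Z else I' (t - 1), ?_, ?_⟩
    · intro t ht
      by_cases h0 : t = 0
      · simp [h0, hZsub, hZcard]
      · have ht' : t - 1 < k := by omega
        simp only [h0, if_false]
        exact ⟨(hI'1 _ ht').1.trans (Finset.sdiff_subset), (hI'1 _ ht').2⟩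
    · intro s t hst ht u hu x hx
      by_cases hs0 : s = 0
      · subst hs0
        simp only [if_pos rfl] at hu
        have ht0 : t ≠ 0 := by omega
        simp only [ht0, if_false] at hx
        have hxY : x ∈ Y \ Z := (hI'1 _ (by omega)).1 hx
        exact hZord u hu x hxY
      · have ht0 : t ≠ 0 := by omega
        simp only [hs0, ht0, if_false] at hu hx
        exact hI'2 (s-1) (t-1) (by omega) (by omega) u hu x hx

end Split

section Greedy

/-- Pigeonhole: some fiber is large. -/
lemma pigeon_fiber {α : Type} [DecidableEq α] (s : Finset α) (g : α → ℕ) (T : Finset ℕ) (m : ℕ)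
    (hmem : ∀ x ∈ s, g x ∈ T) (hT : T.card ≤ m) (hs : 0 < s.card) :
    ∃ j ∈ T, s.card ≤ m * (s.filter (fun x => g x = j)).card := by
  classical
  have hsum : s.card = ∑ j ∈ T, (s.filter (fun x => g x = j)).card :=
    Finset.card_eq_sum_card_fiberwise hmem
  have hTne : T.Nonempty := by
    obtain ⟨x, hx⟩ := Finset.card_pos.mp hs
    exact ⟨g x, hmem x hx⟩
  obtain ⟨j, hjT, hjmax⟩ := Finset.exists_max_image T (fun j => (s.filter (fun x => g x = j)).card) hTne
  refine ⟨j, hjT, ?_⟩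
  calc s.card = ∑ i ∈ T, (s.filter (fun x => g x = i)).card := hsum
    _ ≤ T.card * (s.filter (fun x => g x = j)).card := by
        apply Finset.sum_le_card_nsmul
        intro i hi
        exact hjmax i hi
    _ ≤ m * (s.filter (fun x => g x = j)).card := Nat.mul_le_mul_right _ hT

variable {W : Type} [Fintype W] [LinearOrder W] (H : SimpleGraph W)
variable {V : Type} [LinearOrder V] (G : SimpleGraph V)

/-- Enumeration of `W` along its order, as a total function from `ℕ`. -/
noncomputable def wseq (h : ℕ) (hh : 0 < h) (e : Fin h ≃o W) : ℕ → W :=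
  fun i => e ⟨i % h, Nat.mod_lt i hh⟩

lemma s_lower (lam : ℝ) (hlam0 : 0 < lam) (s : ℕ → ℕ)
    (hs : ∀ t, s (t+1) = ⌈lam * s t⌉₊) :
    ∀ t, lam ^ t * (s 0 : ℝ) ≤ (s t : ℝ) := by
  intro t
  induction t with
  | zero => simp
  | succ t ih =>
    rw [hs t]
    calc lam ^ (t+1) * (s 0 : ℝ) = lam * (lam ^ t * s 0) := by ring
      _ ≤ lam * s t := by nlinarith
      _ ≤ (⌈lam * (s t : ℝ)⌉₊ : ℝ) := Nat.le_ceil _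

lemma greedy (h : ℕ) (hh : 0 < h) (e : Fin h ≃o W)
    (lam : ℝ) (hlam0 : 0 < lam) (hlam1 : lam ≤ 1)
    (I : ℕ → Finset V)
    (Iord : ∀ s t, s < t → t < h → ∀ u ∈ I s, ∀ x ∈ I t, u < x)
    (s : ℕ → ℕ)
    (hs : ∀ t, s (t+1) = ⌈lam * s t⌉₊)
    (hs0 : 1 ≤ s 0) :
    ∀ (k t : ℕ), t + k = h →
    ∀ (v : ℕ → V) (C : ℕ → Finset V),
    (∀ i, i < t → v i ∈ I i) →
    (∀ i j, i < j → j < t →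
      (G.Adj (v i) (v j) ↔ H.Adj (wseq h hh e i) (wseq h hh e j))) →
    (∀ j, t ≤ j → j < h → C j ⊆ I j) →
    (∀ j, t ≤ j → j < h → (C j).card = s t) →
    (∀ i j, i < t → t ≤ j → j < h → ∀ x ∈ C j,
      (G.Adj (v i) x ↔ H.Adj (wseq h hh e i) (wseq h hh e j))) →
    OrdGraphContains G H ∨
    ∃ (A Cc : Finset V) (b : Bool),
      (∃ ta tc, ta ≠ tc ∧ ta < h ∧ tc < h ∧ A ⊆ I ta ∧ Cc ⊆ I tc) ∧
      (lam ^ h * (s 0 : ℝ) ≤ (Cc.card : ℝ)) ∧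
      (Cc.card ≤ h * A.card) ∧
      (b = true → ∀ a ∈ A, (degF G a Cc : ℝ) ≤ lam * (Cc.card : ℝ)) ∧
      (b = false → ∀ a ∈ A, (1 - lam) * (Cc.card : ℝ) ≤ (degF G a Cc : ℝ)) := by
  have hspos : ∀ t, 1 ≤ s t := by
    intro t
    have h1 := s_lower lam hlam0 s hs t
    have h2 : (0 : ℝ) < lam ^ t * (s 0 : ℝ) := by
      have : (0:ℝ) < (s 0 : ℝ) := by exact_mod_cast hs0
      positivity
    have h3 : (0 : ℝ) < (s t : ℝ) := lt_of_lt_of_le h2 h1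
    exact_mod_cast Nat.pos_of_ne_zero (fun h0 => by rw [h0] at h3; norm_num at h3)
  intro k
  induction k with
  | zero =>
    intro t ht v C i1 i2 _ _ _
    left
    have ht' : h = t := by omega
    subst ht'
    refine ⟨fun a => v ((e.symm a : Fin h) : ℕ), ?_, ?_⟩
    · intro a b hab
      have hab' : (e.symm a : Fin h) < e.symm b := by
        exact (OrderIso.lt_iff_lt _).mpr hab
      have hia : ((e.symm a : Fin h) : ℕ) < h := (e.symm a).isLt
      have hib : ((e.symm b : Fin h) : ℕ) < h := (e.symm b).isLt
      exact Iord _ _ hab' hib _ (i1 _ hia) _ (i1 _ hib)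
    · intro a b
      have key : ∀ a' b' : W, ((e.symm a' : Fin h) : ℕ) < ((e.symm b' : Fin h) : ℕ) →
          (G.Adj (v ((e.symm a' : Fin h) : ℕ)) (v ((e.symm b' : Fin h) : ℕ)) ↔ H.Adj a' b') := by
        intro a' b' hlt
        have h2 := i2 _ _ hlt (e.symm b').isLt
        have hw : ∀ c : W, wseq h hh e ((e.symm c : Fin h) : ℕ) = c := by
          intro c
          unfold wseq
          have h5 : (⟨((e.symm c : Fin h) : ℕ) % h, Nat.mod_lt _ hh⟩ : Fin h) = e.symm c := by
            apply Fin.ext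
            simp [Nat.mod_eq_of_lt (e.symm c).isLt]
          rw [h5]
          simp
        have ea := hw a'
        have eb := hw b'
        rwa [ea, eb] at h2
      rcases lt_trichotomy a b with hab | hab | hab
      · exact key a b (by
          have : (e.symm a : Fin h) < e.symm b := (OrderIso.lt_iff_lt _).mpr hab
          exact_mod_cast this)
      · subst hab
        simp [SimpleGraph.irrefl]
      · rw [G.adj_comm, H.adj_comm]
        exact key b a (by
          have : (e.symm b : Fin h) < e.symm a := (OrderIso.lt_iff_lt _).mpr hab
          exact_mod_cast this)
  | succ k ih =>
    intro t ht v C i1 i2 i3 i4 i5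
    have hth : t < h := by omega
    classical
    by_cases hgood : ∃ x ∈ C t, ∀ j, t+1 ≤ j → j < h →
        lam * ((C j).card : ℝ) ≤
          (((C j).filter (fun u => G.Adj x u ↔ H.Adj (wseq h hh e t) (wseq h hh e j))).card : ℝ)
    · -- good vertex: extend the embedding
      obtain ⟨x, hxC, hxgood⟩ := hgood
      have hchoice : ∀ j : ℕ, ∃ D : Finset V,
          D ⊆ (C j).filter (fun u => G.Adj x u ↔ H.Adj (wseq h hh e t) (wseq h hh e j)) ∧
          ((t+1 ≤ j ∧ j < h) → D.card = s (t+1)) := by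
        intro j
        by_cases hj : t+1 ≤ j ∧ j < h
        · have h1 : s (t+1) ≤
              ((C j).filter (fun u => G.Adj x u ↔ H.Adj (wseq h hh e t) (wseq h hh e j))).card := by
            rw [hs t, Nat.ceil_le]
            calc lam * (s t : ℝ) = lam * ((C j).card : ℝ) := by
                  rw [i4 j (by omega) hj.2]
              _ ≤ _ := hxgood j hj.1 hj.2
          obtain ⟨D, hD1, hD2⟩ := Finset.exists_subset_card_eq h1
          exact ⟨D, hD1, fun _ => hD2⟩
        · exact ⟨∅, Finset.empty_subset _, fun hc => absurd hc hj⟩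
      choose Cn hCn1 hCn2 using hchoice
      refine ih (t+1) (by omega) (fun i => if i = t then x else v i) Cn ?_ ?_ ?_ ?_ ?_
      · -- i1
        intro i hi
        by_cases hit : i = t
        · simp only [if_pos hit, hit]; exact i3 t le_rfl hth hxC
        · simp only [if_neg hit]; exact i1 i (by omega)
      · -- i2
        intro i j hij hj
        by_cases hjt : j = t
        · have hit : i ≠ t := by omega
          simp only [if_neg hit, if_pos hjt, hjt]
          exact i5 i t (by omega) le_rfl hth x hxC
        · have hit : i ≠ t := by omega
          simp only [if_neg hit, if_neg hjt]
          exact i2 i j hij (by omega)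
      · -- i3
        intro j hj1 hj2
        exact (hCn1 j).trans ((Finset.filter_subset _ _).trans (i3 j (by omega) hj2))
      · -- i4
        intro j hj1 hj2
        exact hCn2 j ⟨hj1, hj2⟩
      · -- i5
        intro i j hi hj1 hj2 u hu
        by_cases hit : i = t
        · simp only [if_pos hit, hit]
          exact (Finset.mem_filter.mp (Finset.mem_of_subset (hCn1 j) hu)).2
        · simp only [if_neg hit]
          exact i5 i j (by omega) (by omega) hj2 u
            (Finset.mem_of_subset ((hCn1 j).trans (Finset.filter_subset _ _)) hu)
    · -- no good vertex: sparse/dense pair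
      right
      push_neg at hgood
      have hCt : 0 < (C t).card := by
        rw [i4 t le_rfl hth]
        exact hspos t
      set jf : V → ℕ := fun x => if hx : x ∈ C t then (hgood x hx).choose else t+1 with hjf
      have hjf_mem : ∀ x ∈ C t, jf x ∈ Finset.Ico (t+1) h := by
        intro x hx
        simp only [hjf, dif_pos hx]
        obtain ⟨hj1, hj2, _⟩ := (hgood x hx).choose_spec
        exact Finset.mem_Ico.mpr ⟨hj1, hj2⟩
      have hjf_spec : ∀ x ∈ C t,
          (((C (jf x)).filter (fun u => G.Adj x u ↔
            H.Adj (wseq h hh e t) (wseq h hh e (jf x)))).card : ℝ)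
            < lam * ((C (jf x)).card : ℝ) := by
        intro x hx
        simp only [hjf, dif_pos hx]
        exact (hgood x hx).choose_spec.2.2
      obtain ⟨jst, hjst_mem, hjst⟩ := pigeon_fiber (C t) jf (Finset.Ico (t+1) h) h
        hjf_mem (by rw [Nat.card_Ico]; omega) hCt
      obtain ⟨hjst1, hjst2⟩ := Finset.mem_Ico.mp hjst_mem
      have hAspec : ∀ a ∈ (C t).filter (fun x => jf x = jst),
          (((C jst).filter (fun u => G.Adj a u ↔
            H.Adj (wseq h hh e t) (wseq h hh e jst))).card : ℝ)
            < lam * ((C jst).card : ℝ) := by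
        intro a ha
        obtain ⟨haC, haj⟩ := Finset.mem_filter.mp ha
        have h2 := hjf_spec a haC
        rwa [haj] at h2
      have hCccard : (C jst).card = s t := i4 jst (by omega) hjst2
      have hsub : (C t).filter (fun x => jf x = jst) ⊆ I t :=
        (Finset.filter_subset _ _).trans (i3 t le_rfl hth)
      have hCcsub : C jst ⊆ I jst := i3 jst (by omega) hjst2
      have hsize1 : lam ^ h * (s 0 : ℝ) ≤ ((C jst).card : ℝ) := by
        rw [hCccard]
        have h6 : lam ^ h ≤ lam ^ t := pow_le_pow_of_le_one (le_of_lt hlam0) hlam1 (by omega)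
        have h7 := s_lower lam hlam0 s hs t
        have h8 : (0:ℝ) ≤ (s 0 : ℝ) := by positivity
        nlinarith
      have hsize2 : (C jst).card ≤ h * ((C t).filter (fun x => jf x = jst)).card := by
        rw [hCccard, ← i4 t le_rfl hth]
        exact hjst
      by_cases hHadj : H.Adj (wseq h hh e t) (wseq h hh e jst)
      · -- sparse pair
        refine ⟨(C t).filter (fun x => jf x = jst), C jst, true,
          ⟨t, jst, by omega, hth, hjst2, hsub, hCcsub⟩, hsize1, hsize2, ?_, by simp⟩
        intro _ a ha
        have hfe : (C jst).filter (fun u => G.Adj a u ↔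
            H.Adj (wseq h hh e t) (wseq h hh e jst)) = (C jst).filter (fun u => G.Adj a u) := by
          apply Finset.filter_congr
          intro u _
          simp [hHadj]
        have h2 := hAspec a ha
        rw [hfe] at h2
        exact le_of_lt h2
      · -- dense pair
        refine ⟨(C t).filter (fun x => jf x = jst), C jst, false,
          ⟨t, jst, by omega, hth, hjst2, hsub, hCcsub⟩, hsize1, hsize2, by simp, ?_⟩
        intro _ a ha
        have hfe : (C jst).filter (fun u => G.Adj a u ↔
            H.Adj (wseq h hh e t) (wseq h hh e jst)) = (C jst).filter (fun u => ¬ G.Adj a u) := by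
          apply Finset.filter_congr
          intro u _
          simp [hHadj]
        have h2 := hAspec a ha
        rw [hfe] at h2
        have h3 : (ndegF G a (C jst) : ℝ) < lam * ((C jst).card : ℝ) := h2
        have h4 : (degF G a (C jst) : ℝ) + (ndegF G a (C jst) : ℝ) = ((C jst).card : ℝ) := by
          exact_mod_cast degF_add_ndegF G a (C jst)
        nlinarith

end Greedy

section MainPair
variable {W : Type} [Fintype W] [LinearOrder W] (H : SimpleGraph W)
variable {V : Type} [LinearOrder V] (G : SimpleGraph V)

lemma main_pair (h : ℕ) (hh : 0 < h) (hcW : Fintype.card W = h)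
    (lam : ℝ) (hlam0 : 0 < lam) (hlam1 : lam ≤ 1)
    (Y : Finset V) (hY : 2 * h ≤ Y.card) :
    OrdGraphContains G H ∨
    ∃ (A Cc : Finset V) (b : Bool), A ⊆ Y ∧ Cc ⊆ Y ∧ Disjoint A Cc ∧
      (lam ^ h * (Y.card : ℝ) / (2 * h) ≤ (Cc.card : ℝ)) ∧
      (Cc.card ≤ h * A.card) ∧
      (b = true → ∀ a ∈ A, (degF G a Cc : ℝ) ≤ lam * (Cc.card : ℝ)) ∧
      (b = false → ∀ a ∈ A, (1 - lam) * (Cc.card : ℝ) ≤ (degF G a Cc : ℝ)) := by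
  classical
  have e : Fin h ≃o W := Fintype.orderIsoFinOfCardEq (α := W) hcW
  set q₀ := Y.card / h with hq₀
  have hq : q₀ * h ≤ Y.card := Nat.div_mul_le_self _ _
  have hq1 : 1 ≤ q₀ := by
    rw [hq₀]
    exact Nat.one_le_div_iff hh |>.mpr (by omega)
  obtain ⟨I, hI1, hI2⟩ := exists_split h Y q₀ hq
  have hYne : Y.Nonempty := Finset.card_pos.mp (by omega)
  obtain ⟨y₀, _⟩ := hYne
  set sfun : ℕ → ℕ := fun t => Nat.rec q₀ (fun _ ihs => ⌈lam * ihs⌉₊) t with hsfun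
  have hres := greedy H G h hh e lam hlam0 hlam1 I hI2 sfun (fun t => rfl) hq1
    h 0 (by omega) (fun _ => y₀) I (by omega) (by omega)
    (fun j _ hj => Finset.Subset.refl _) (fun j _ hj => (hI1 j hj).2) (by omega)
  rcases hres with hleft | ⟨A, Cc, b, ⟨ta, tc, hne, hta, htc, hAsub, hCsub⟩, hc1, hc2, hc3, hc4⟩
  · exact Or.inl hleft
  · right
    refine ⟨A, Cc, b, hAsub.trans (hI1 ta hta).1, hCsub.trans (hI1 tc htc).1, ?_, ?_, hc2, hc3, hc4⟩
    · rw [Finset.disjoint_left]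
      intro a haA haC
      rcases Nat.lt_or_ge ta tc with hlt | hge
      · exact lt_irrefl a (hI2 ta tc hlt htc a (hAsub haA) a (hCsub haC))
      · have hlt : tc < ta := by omega
        exact lt_irrefl a (hI2 tc ta hlt hta a (hCsub haC) a (hAsub haA))
    · have hs0 : (sfun 0 : ℕ) = q₀ := rfl
      have hdm := Nat.div_add_mod Y.card h
      have hmlt : Y.card % h < h := Nat.mod_lt _ hh
      have hq₀real : (Y.card : ℝ) / (2 * h) ≤ (q₀ : ℝ) := by
        rw [div_le_iff₀ (by positivity)]
        have h1 : (Y.card : ℝ) = h * q₀ + (Y.card % h : ℕ) := by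
          rw [hq₀]; exact_mod_cast hdm.symm
        have h2 : ((Y.card % h : ℕ) : ℝ) < (h : ℝ) := by exact_mod_cast hmlt
        have h3 : (2 * h : ℝ) ≤ (Y.card : ℝ) := by exact_mod_cast hY
        nlinarith [Nat.cast_nonneg (α := ℝ) q₀]
      rw [hs0] at hc1
      have hlamh : (0:ℝ) < lam ^ h := by positivity
      calc lam ^ h * (Y.card : ℝ) / (2 * h) = lam ^ h * ((Y.card : ℝ) / (2 * h)) := by ring
        _ ≤ lam ^ h * (q₀ : ℝ) := by nlinarith
        _ ≤ (Cc.card : ℝ) := hc1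

end MainPair

section Iter
variable {W : Type} [Fintype W] [LinearOrder W]

set_option maxHeartbeats 1600000 in
lemma iter (H : SimpleGraph W) (h : ℕ) (hh : 0 < h) (hcW : Fintype.card W = h) :
    ∀ (T : ℕ) (ep : ℝ), 0 < ep → ep ≤ 1/2 →
    ∃ β : ℝ, 0 < β ∧ β ≤ 1 ∧
    ∀ (V : Type) [inst : LinearOrder V] (G : SimpleGraph V) (Y : Finset V),
      ¬ OrdGraphContains G H → (2 * h : ℝ) ≤ β * (Y.card : ℝ) →
      ∃ (m : ℕ) (S : ℕ → Finset V) (τ : ℕ → Bool),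
        β * (Y.card : ℝ) ≤ (m : ℝ) ∧
        (∀ i, i < T → S i ⊆ Y) ∧
        (∀ i, i < T → (S i).card = m) ∧
        (∀ i j, i < j → j < T → Disjoint (S i) (S j)) ∧
        (∀ i j, i < j → j < T → ∀ v ∈ S i,
          (τ i = true → (degF G v (S j) : ℝ) ≤ ep * (m : ℝ)) ∧
          (τ i = false → (m : ℝ) - ep * (m : ℝ) ≤ (degF G v (S j) : ℝ))) := by
  intro T
  induction T with
  | zero =>
    intro ep _ _
    refine ⟨1, one_pos, le_rfl, ?_⟩
    intro V _ G Y _ _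
    exact ⟨Y.card, fun _ => ∅, fun _ => true, by norm_num, by omega, by omega, by omega, by omega⟩
  | succ T ihT =>
    intro ep hep0 hep1
    obtain ⟨β0, hβ0pos, hβ0le, IH⟩ := ihT (ep / h) (by positivity)
      (le_trans (by
        rw [div_le_iff₀ (by exact_mod_cast hh)]
        nlinarith [show (1:ℝ) ≤ (h:ℝ) from by exact_mod_cast hh, hep0]) hep1)
    set μ := min β0 (1 / (h : ℝ)) with hμ
    have hμpos : 0 < μ := lt_min hβ0pos (by positivity)
    have hμ1 : μ ≤ 1 := le_trans (min_le_right _ _) (by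
      rw [div_le_one (by exact_mod_cast hh)]
      exact_mod_cast hh)
    set lam := ep * μ with hlam
    have hlam0 : 0 < lam := by positivity
    have hlam1 : lam ≤ 1 := by nlinarith
    set β := μ * lam ^ h / (2 * h) with hβ
    have hβpos : 0 < β := by positivity
    have hβle1 : β ≤ 1 := by
      rw [hβ, div_le_one (by positivity)]
      have h1 : lam ^ h ≤ 1 := pow_le_one₀ (le_of_lt hlam0) hlam1
      have h2 : (1 : ℝ) ≤ 2 * h := by
        have : (1:ℝ) ≤ (h:ℝ) := by exact_mod_cast hh
        nlinarith
      nlinarith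
    refine ⟨β, hβpos, hβle1, ?_⟩
    intro V _ G Y hfree hguard
    have hYc1 : β * (Y.card : ℝ) ≤ (Y.card : ℝ) := by
      nlinarith [Nat.cast_nonneg (α := ℝ) Y.card]
    have hYcard : 2 * h ≤ Y.card := by
      have : (2 * h : ℝ) ≤ (Y.card : ℝ) := le_trans hguard hYc1
      exact_mod_cast this
    rcases main_pair H G h hh hcW lam hlam0 hlam1 Y hYcard with hcon | hpair
    · exact absurd hcon hfree
    obtain ⟨A, Cc, b, hAY, hCY, hACdisj, hCsize, hCA, hbs, hbd⟩ := hpair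
    -- lower bound on |Cc|
    have hCclb : lam ^ h * (Y.card : ℝ) / (2 * h) ≤ (Cc.card : ℝ) := hCsize
    -- guard for the IH
    have hguard' : (2 * h : ℝ) ≤ β0 * (Cc.card : ℝ) := by
      have h1 : β * (Y.card : ℝ) ≤ β0 * (lam ^ h * (Y.card : ℝ) / (2 * h)) := by
        rw [hβ]
        have hY0 : (0:ℝ) ≤ (Y.card : ℝ) := Nat.cast_nonneg _
        have e2 : μ * (Y.card : ℝ) ≤ β0 * (Y.card : ℝ) :=
          mul_le_mul_of_nonneg_right (min_le_left _ _) hY0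
        rw [show μ * lam ^ h / (2 * h) * (Y.card:ℝ) = μ * (Y.card:ℝ) * (lam ^ h / (2*h)) from by
          ring]
        rw [show β0 * (lam ^ h * (Y.card:ℝ) / (2 * h)) = β0 * (Y.card:ℝ) * (lam ^ h / (2*h)) from by
          ring]
        have hpos : (0:ℝ) ≤ lam ^ h / (2*h) := by positivity
        exact mul_le_mul_of_nonneg_right e2 hpos
      calc (2 * h : ℝ) ≤ β * (Y.card : ℝ) := hguard
        _ ≤ β0 * (lam ^ h * (Y.card : ℝ) / (2 * h)) := h1
        _ ≤ β0 * (Cc.card : ℝ) := mul_le_mul_of_nonneg_left hCclb (le_of_lt hβ0pos)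
    obtain ⟨m', S', τ', hm'lb, hS'Y, hS'card, hS'disj, hS'cross⟩ := IH V G Cc hfree hguard'
    -- sizes
    have hAc : (Cc.card : ℝ) ≤ h * (A.card : ℝ) := by exact_mod_cast hCA
    have hAcard : (Cc.card : ℝ) / h ≤ (A.card : ℝ) := by
      rw [div_le_iff₀ (by exact_mod_cast hh)]
      nlinarith
    set m := min m' A.card with hm
    have hmlb : μ * (Cc.card : ℝ) ≤ (m : ℝ) := by
      have h1 : μ * (Cc.card : ℝ) ≤ β0 * (Cc.card : ℝ) := by
        have : μ ≤ β0 := min_le_left _ _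
        nlinarith [Nat.cast_nonneg (α := ℝ) Cc.card]
      have h2 : μ * (Cc.card : ℝ) ≤ (Cc.card : ℝ) / h := by
        have h3 : μ ≤ 1 / h := min_le_right _ _
        have h4 : (0:ℝ) ≤ (Cc.card:ℝ) := Nat.cast_nonneg _
        rw [div_eq_mul_inv, ← one_div]
        nlinarith
      rcases le_total m' A.card with hc | hc
      · rw [hm, min_eq_left hc]
        exact le_trans h1 hm'lb
      · rw [hm, min_eq_right hc]
        exact le_trans h2 hAcard
    have hmβ : β * (Y.card : ℝ) ≤ (m : ℝ) := by
      calc β * (Y.card : ℝ) = μ * (lam ^ h * (Y.card : ℝ) / (2 * h)) := by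
            rw [hβ]; ring
        _ ≤ μ * (Cc.card : ℝ) := mul_le_mul_of_nonneg_left hCclb (le_of_lt hμpos)
        _ ≤ (m : ℝ) := hmlb
    -- trims
    have hmA : m ≤ A.card := min_le_right _ _
    have hmm' : m ≤ m' := min_le_left _ _
    obtain ⟨A', hA'sub, hA'card⟩ := Finset.exists_subset_card_eq hmA
    have htrim : ∀ i : ℕ, ∃ D, D ⊆ S' i ∧ (i < T → D.card = m) := by
      intro i
      by_cases hi : i < T
      · obtain ⟨D, hD1, hD2⟩ := Finset.exists_subset_card_eq
          (le_trans hmm' (le_of_eq (hS'card i hi).symm))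
        exact ⟨D, hD1, fun _ => hD2⟩
      · exact ⟨∅, Finset.empty_subset _, fun hc => absurd hc hi⟩
    choose D hD1 hD2 using htrim
    refine ⟨m, fun i => if i = 0 then A' else D (i - 1), fun i => if i = 0 then b else τ' (i - 1),
      hmβ, ?_, ?_, ?_, ?_⟩
    · intro i hi
      by_cases hi0 : i = 0
      · simp only [hi0, if_pos rfl]
        exact hA'sub.trans hAY
      · simp only [if_neg hi0]
        exact ((hD1 (i-1)).trans (hS'Y (i-1) (by omega))).trans hCY
    · intro i hi
      by_cases hi0 : i = 0
      · simp only [hi0, if_pos rfl]; exact hA'card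
      · simp only [if_neg hi0]; exact hD2 (i-1) (by omega)
    · intro i j hij hj
      have hj0 : j ≠ 0 := by omega
      by_cases hi0 : i = 0
      · simp only [hi0, if_pos rfl, if_neg hj0]
        exact Finset.disjoint_of_subset_left hA'sub
          (Finset.disjoint_of_subset_right ((hD1 (j-1)).trans (hS'Y (j-1) (by omega))) hACdisj)
      · simp only [if_neg hi0, if_neg hj0]
        exact Finset.disjoint_of_subset_left (hD1 (i-1))
          (Finset.disjoint_of_subset_right (hD1 (j-1)) (hS'disj (i-1) (j-1) (by omega) (by omega)))
    · intro i j hij hj v hv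
      have hj0 : j ≠ 0 := by omega
      have hjT : j - 1 < T := by omega
      have hDsub : D (j-1) ⊆ Cc := (hD1 (j-1)).trans (hS'Y (j-1) hjT)
      have hDcard : (D (j-1)).card = m := hD2 (j-1) hjT
      by_cases hi0 : i = 0
      · -- new block
        simp only [hi0, if_pos rfl, if_neg hj0] at hv ⊢
        have hvA : v ∈ A := hA'sub hv
        have hkey : lam * (Cc.card : ℝ) ≤ ep * (m : ℝ) := by
          rw [hlam]
          calc ep * μ * (Cc.card : ℝ) = ep * (μ * (Cc.card : ℝ)) := by ring
            _ ≤ ep * (m : ℝ) := mul_le_mul_of_nonneg_left hmlb (le_of_lt hep0)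
        constructor
        · intro hb
          have h1 := hbs hb v hvA
          calc (degF G v (D (j-1)) : ℝ) ≤ (degF G v Cc : ℝ) := by
                exact_mod_cast degF_mono G v hDsub
            _ ≤ lam * (Cc.card : ℝ) := h1
            _ ≤ ep * (m : ℝ) := hkey
        · intro hb
          have h1 := hbd hb v hvA
          have h2 : (ndegF G v Cc : ℝ) ≤ lam * (Cc.card : ℝ) := by
            have h3 : (degF G v Cc : ℝ) + (ndegF G v Cc : ℝ) = (Cc.card : ℝ) := by
              exact_mod_cast degF_add_ndegF G v Cc
            have h6 : (Cc.card:ℝ) - (1-lam) * (Cc.card:ℝ) = lam * (Cc.card:ℝ) := by ring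
            linarith
          have h4 : (ndegF G v (D (j-1)) : ℝ) ≤ (ndegF G v Cc : ℝ) := by
            exact_mod_cast ndegF_mono G v hDsub
          have h5 : (degF G v (D (j-1)) : ℝ) + (ndegF G v (D (j-1)) : ℝ) = (m : ℝ) := by
            rw [← hDcard]
            exact_mod_cast degF_add_ndegF G v (D (j-1))
          linarith
      · -- old blocks
        simp only [if_neg hi0, if_neg hj0] at hv ⊢
        have hiT : i - 1 < T := by omega
        have hvS : v ∈ S' (i-1) := hD1 (i-1) hv
        have hcross := hS'cross (i-1) (j-1) (by omega) hjT v hvS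
        have hm'Cc : (m' : ℝ) ≤ (Cc.card : ℝ) := by
          have := Finset.card_le_card (hS'Y (j-1) hjT)
          rw [hS'card (j-1) hjT] at this
          exact_mod_cast this
        have hm'hm : (m' : ℝ) ≤ h * (m : ℝ) := by
          rcases le_total m' A.card with hc | hc
          · rw [hm, min_eq_left hc]
            have h1 : (1:ℝ) ≤ (h:ℝ) := by exact_mod_cast hh
            nlinarith [Nat.cast_nonneg (α := ℝ) m']
          · rw [hm, min_eq_right hc]
            calc (m' : ℝ) ≤ (Cc.card : ℝ) := hm'Cc
              _ ≤ h * (A.card : ℝ) := hAc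
        constructor
        · intro hb
          have h1 := (hcross).1 hb
          calc (degF G v (D (j-1)) : ℝ) ≤ (degF G v (S' (j-1)) : ℝ) := by
                exact_mod_cast degF_mono G v (hD1 (j-1))
            _ ≤ ep / h * (m' : ℝ) := h1
            _ ≤ ep * (m : ℝ) := by
                rw [div_mul_eq_mul_div, div_le_iff₀ (show (0:ℝ) < (h:ℝ) from by exact_mod_cast hh)]
                calc ep * (m':ℝ) ≤ ep * ((h:ℝ) * m) := mul_le_mul_of_nonneg_left hm'hm (le_of_lt hep0)
                  _ = ep * (m:ℝ) * h := by ring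
        · intro hb
          have h1 := (hcross).2 hb
          have h2 : (degF G v (S' (j-1)) : ℝ) ≤ (degF G v (D (j-1)) : ℝ) + ((m' : ℝ) - m) := by
            have h3 := degF_sub_le G v (hD1 (j-1))
            rw [hS'card (j-1) hjT, hDcard] at h3
            have h4 : ((m' - m : ℕ) : ℝ) = (m' : ℝ) - m := by
              rw [Nat.cast_sub hmm']
            calc (degF G v (S' (j-1)) : ℝ) ≤ (degF G v (D (j-1)) : ℝ) + ((m' - m : ℕ) : ℝ) := by
                  exact_mod_cast h3
              _ = (degF G v (D (j-1)) : ℝ) + ((m' : ℝ) - m) := by rw [h4]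
          have h5 : ep / h * (m' : ℝ) ≤ ep * (m : ℝ) := by
            rw [div_mul_eq_mul_div, div_le_iff₀ (show (0:ℝ) < (h:ℝ) from by exact_mod_cast hh)]
            calc ep * (m':ℝ) ≤ ep * ((h:ℝ) * m) := mul_le_mul_of_nonneg_left hm'hm (le_of_lt hep0)
              _ = ep * (m:ℝ) * h := by ring
          linarith

end Iter

section Cleanup
variable {V : Type} [LinearOrder V]

lemma cleanup (G2 : SimpleGraph V) (Q : Finset ℕ) (m : ℕ) (hm : 0 < m) (S : ℕ → Finset V)
    (eps ep : ℝ) (heps : 0 < eps) (hepsle : eps ≤ 1) (hep0 : 0 ≤ ep) (hep : ep ≤ eps^2 / 8)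
    (hT : 8 / eps ≤ (Q.card : ℝ))
    (hcard : ∀ i ∈ Q, (S i).card = m)
    (hdisj : ∀ i ∈ Q, ∀ j ∈ Q, i ≠ j → Disjoint (S i) (S j))
    (hcross : ∀ i ∈ Q, ∀ j ∈ Q, i < j → ∀ v ∈ S i, (degF G2 v (S j) : ℝ) ≤ ep * m) :
    ∃ X' : Finset V, X' ⊆ Q.biUnion S ∧ ((Q.card : ℝ) * m / 2 ≤ (X'.card : ℝ)) ∧
      ∀ v ∈ X', (degF G2 v X' : ℝ) < eps * (X'.card : ℝ) := by
  classical
  set X := Q.biUnion S with hX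
  set T := Q.card with hTdef
  have hTpos : 0 < T := by
    rcases Nat.eq_zero_or_pos T with h0 | h
    · exfalso
      rw [h0] at hT
      have h1 : (0:ℝ) < 8 / eps := by positivity
      simp only [Nat.cast_zero] at hT
      linarith
    · exact h
  have hXcard : X.card = T * m := by
    rw [hX, Finset.card_biUnion hdisj]
    rw [Finset.sum_congr rfl hcard, Finset.sum_const, smul_eq_mul]
  -- cross sums
  have hEsym : ∀ i ∈ Q, ∀ j ∈ Q, i ≠ j →
      ((∑ v ∈ S i, degF G2 v (S j) : ℕ) : ℝ) ≤ ep * m * m := by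
    intro i hi j hj hij
    rcases Nat.lt_or_ge i j with hlt | hge
    · push_cast
      calc ∑ v ∈ S i, (degF G2 v (S j) : ℝ) ≤ ∑ _v ∈ S i, ep * (m:ℝ) :=
            Finset.sum_le_sum (fun v hv => hcross i hi j hj hlt v hv)
        _ = (S i).card * (ep * m) := by rw [Finset.sum_const, nsmul_eq_mul]
        _ = ep * m * m := by rw [hcard i hi]; ring
    · have hlt : j < i := by omega
      rw [sum_degF_comm]
      push_cast
      calc ∑ u ∈ S j, (degF G2 u (S i) : ℝ) ≤ ∑ _u ∈ S j, ep * (m:ℝ) :=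
            Finset.sum_le_sum (fun u hu => hcross j hj i hi hlt u hu)
        _ = (S j).card * (ep * m) := by rw [Finset.sum_const, nsmul_eq_mul]
        _ = ep * m * m := by rw [hcard j hj]; ring
  have hEdiag : ∀ i ∈ Q, ((∑ v ∈ S i, degF G2 v (S i) : ℕ) : ℝ) ≤ (m:ℝ) * m := by
    intro i hi
    push_cast
    calc ∑ v ∈ S i, (degF G2 v (S i) : ℝ) ≤ ∑ _v ∈ S i, (m:ℝ) := by
          apply Finset.sum_le_sum
          intro v hv
          have := degF_le_card G2 v (S i)
          rw [hcard i hi] at this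
          exact_mod_cast this
      _ = (S i).card * (m:ℝ) := by rw [Finset.sum_const, nsmul_eq_mul]
      _ = (m:ℝ) * m := by rw [hcard i hi]
  -- total degree sum
  have hdegsum : ((∑ v ∈ X, degF G2 v X : ℕ) : ℝ) ≤ T * m^2 + T^2 * ep * m^2 := by
    have h1 : (∑ v ∈ X, degF G2 v X : ℕ) = ∑ i ∈ Q, ∑ v ∈ S i, degF G2 v X := by
      rw [hX]
      exact Finset.sum_biUnion (fun i hi j hj hij => hdisj i hi j hj hij)
    have h2 : ∀ i ∈ Q, ∀ v ∈ S i, degF G2 v X ≤ ∑ j ∈ Q, degF G2 v (S j) := by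
      intro i hi v hv
      rw [hX]
      convert degF_biUnion_le G2 Q S v using 3
    have h3 : ((∑ v ∈ X, degF G2 v X : ℕ) : ℝ) ≤
        ∑ i ∈ Q, ∑ j ∈ Q, ((∑ v ∈ S i, degF G2 v (S j) : ℕ) : ℝ) := by
      rw [h1]
      push_cast
      apply Finset.sum_le_sum
      intro i hi
      calc ∑ v ∈ S i, (degF G2 v X : ℝ)
          ≤ ∑ v ∈ S i, ∑ j ∈ Q, (degF G2 v (S j) : ℝ) := by
            apply Finset.sum_le_sum
            intro v hv
            exact_mod_cast h2 i hi v hv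
        _ = ∑ j ∈ Q, ∑ v ∈ S i, (degF G2 v (S j) : ℝ) := Finset.sum_comm
    have h4 : ∀ i ∈ Q, ∑ j ∈ Q, ((∑ v ∈ S i, degF G2 v (S j) : ℕ) : ℝ) ≤
        (m:ℝ) * m + T * (ep * m * m) := by
      intro i hi
      rw [← Finset.sum_erase_add Q _ hi]
      have h5 : ∑ j ∈ Q.erase i, ((∑ v ∈ S i, degF G2 v (S j) : ℕ) : ℝ) ≤
          ((Q.erase i).card : ℝ) * (ep * m * m) := by
        calc ∑ j ∈ Q.erase i, ((∑ v ∈ S i, degF G2 v (S j) : ℕ) : ℝ)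
            ≤ ∑ _j ∈ Q.erase i, (ep * (m:ℝ) * m) := by
              apply Finset.sum_le_sum
              intro j hj
              exact hEsym i hi j (Finset.mem_of_mem_erase hj) (Ne.symm (Finset.ne_of_mem_erase hj))
          _ = ((Q.erase i).card : ℝ) * (ep * m * m) := by rw [Finset.sum_const, nsmul_eq_mul]
      have h6 : ((Q.erase i).card : ℝ) * (ep * m * m) ≤ (T:ℝ) * (ep * m * m) := by
        apply mul_le_mul_of_nonneg_right _ (by positivity)
        have := Finset.card_erase_le (s := Q) (a := i)
        exact_mod_cast le_trans this (le_refl _)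
      have h7 := hEdiag i hi
      calc ∑ j ∈ Q.erase i, ((∑ v ∈ S i, degF G2 v (S j) : ℕ) : ℝ) +
            ((∑ v ∈ S i, degF G2 v (S i) : ℕ) : ℝ)
          ≤ (Q.erase i).card * (ep * m * m) + (m:ℝ)*m := by
            apply add_le_add _ h7
            exact_mod_cast h5
        _ ≤ (T:ℝ) * (ep * m * m) + (m:ℝ)*m := by linarith
        _ = (m:ℝ) * m + T * (ep * m * m) := by ring
    calc ((∑ v ∈ X, degF G2 v X : ℕ) : ℝ)
        ≤ ∑ i ∈ Q, ∑ j ∈ Q, ((∑ v ∈ S i, degF G2 v (S j) : ℕ) : ℝ) := h3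
      _ ≤ ∑ _i ∈ Q, ((m:ℝ) * m + T * (ep * m * m)) := Finset.sum_le_sum h4
      _ = (T:ℝ) * ((m:ℝ) * m + T * (ep * m * m)) := by
          rw [Finset.sum_const, nsmul_eq_mul, hTdef]
      _ = T * m^2 + T^2 * ep * m^2 := by ring
  -- remove high-degree vertices
  set θ := eps / 2 * ((T:ℝ) * m) with hθ
  set Z := X.filter (fun v => θ ≤ (degF G2 v X : ℝ)) with hZ
  have hθpos : 0 < θ := by
    rw [hθ]
    have h8 : (0:ℝ) < (T:ℝ) := by exact_mod_cast hTpos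
    have h9 : (0:ℝ) < (m:ℝ) := by exact_mod_cast hm
    positivity
  have hZbound : (Z.card : ℝ) * θ ≤ ((∑ v ∈ X, degF G2 v X : ℕ) : ℝ) := by
    calc (Z.card : ℝ) * θ = ∑ _v ∈ Z, θ := by rw [Finset.sum_const, nsmul_eq_mul]
      _ ≤ ∑ v ∈ Z, (degF G2 v X : ℝ) := by
          apply Finset.sum_le_sum
          intro v hv
          exact (Finset.mem_filter.mp hv).2
      _ ≤ ∑ v ∈ X, (degF G2 v X : ℝ) := by
          apply Finset.sum_le_sum_of_subset_of_nonneg (Finset.filter_subset _ _)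
          intro v _ _
          positivity
      _ = ((∑ v ∈ X, degF G2 v X : ℕ) : ℝ) := by push_cast; rfl
  have hZsmall : (Z.card : ℝ) ≤ (T:ℝ) * m / 2 := by
    have h8 : (0:ℝ) < (T:ℝ) := by exact_mod_cast hTpos
    have h9 : (0:ℝ) < (m:ℝ) := by exact_mod_cast hm
    have h10 : (Z.card : ℝ) * θ ≤ T * m^2 + T^2 * ep * m^2 := le_trans hZbound hdegsum
    rw [hθ] at h10
    -- Z * (eps/2 * T * m) ≤ T m² + T² ep m² with ep ≤ eps²/8 and T ≥ 8/eps
    have h13 : (8:ℝ) ≤ eps * T := by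
      have h12 : (8:ℝ) / eps ≤ T := hT
      rw [div_le_iff₀ heps] at h12
      linarith
    have h11 : (T:ℝ) * m^2 ≤ eps / 8 * (T * (T * m) * m) := by
      have h18 : (8:ℝ) * ((T:ℝ)*m^2/8) ≤ (eps*T) * ((T:ℝ)*m^2/8) :=
        mul_le_mul_of_nonneg_right h13 (by positivity)
      calc (T:ℝ)*m^2 = 8 * ((T:ℝ)*m^2/8) := by ring
        _ ≤ (eps*T) * ((T:ℝ)*m^2/8) := h18
        _ = eps/8 * (T*(T*m)*m) := by ring
    have hTm2 : (0:ℝ) ≤ (T:ℝ)^2 * m^2 := by positivity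
    have h14 : (T:ℝ)^2 * ep * m^2 ≤ eps / 8 * (T * (T * m) * m) := by
      calc (T:ℝ)^2 * ep * m^2 = ep * ((T:ℝ)^2 * m^2) := by ring
        _ ≤ eps^2/8 * ((T:ℝ)^2*m^2) := mul_le_mul_of_nonneg_right hep hTm2
        _ ≤ eps/8 * ((T:ℝ)^2*m^2) := by
            apply mul_le_mul_of_nonneg_right _ hTm2
            nlinarith
        _ = eps / 8 * (T * (T * m) * m) := by ring
    have hc0 : (0:ℝ) < eps/2 * ((T:ℝ)*m) := by positivity
    have h21 : (Z.card:ℝ) * (eps/2*((T:ℝ)*m)) ≤ ((T:ℝ)*m/2) * (eps/2*((T:ℝ)*m)) := by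
      have he : ((T:ℝ)*m/2) * (eps/2*((T:ℝ)*m)) = eps/8*(T*(T*m)*m) + eps/8*(T*(T*m)*m) := by
        ring
      linarith
    exact le_of_mul_le_mul_right h21 hc0
  refine ⟨X \ Z, Finset.sdiff_subset, ?_, ?_⟩
  · have h15 : (X \ Z).card = X.card - Z.card := Finset.card_sdiff_of_subset (Finset.filter_subset _ _)
    have h16 : Z.card ≤ X.card := Finset.card_le_card (Finset.filter_subset _ _)
    have h17 : ((X \ Z).card : ℝ) = (X.card : ℝ) - Z.card := by
      rw [h15, Nat.cast_sub h16]
    rw [h17, hXcard]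
    push_cast
    linarith
  · intro v hv
    obtain ⟨hvX, hvZ⟩ := Finset.mem_sdiff.mp hv
    have hdeg : (degF G2 v X : ℝ) < θ := by
      by_contra hc
      push_neg at hc
      exact hvZ (Finset.mem_filter.mpr ⟨hvX, hc⟩)
    have hmono : (degF G2 v (X \ Z) : ℝ) ≤ (degF G2 v X : ℝ) := by
      exact_mod_cast degF_mono G2 v (Finset.sdiff_subset)
    have hbig : θ ≤ eps * ((X \ Z).card : ℝ) := by
      have h15 : (X \ Z).card = X.card - Z.card := Finset.card_sdiff_of_subset (Finset.filter_subset _ _)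
      have h16 : Z.card ≤ X.card := Finset.card_le_card (Finset.filter_subset _ _)
      have h17 : ((X \ Z).card : ℝ) = (X.card : ℝ) - Z.card := by
        rw [h15, Nat.cast_sub h16]
      rw [h17, hXcard, hθ]
      push_cast
      nlinarith [mul_le_mul_of_nonneg_left hZsmall (le_of_lt heps)]
    linarith

end Cleanup

section Final
variable {V : Type} [LinearOrder V]

lemma ncard_neighbor_inter (G : SimpleGraph V) (v : V) (X : Finset V) :
    (G.neighborSet v ∩ ↑X).ncard = degF G v X := by
  have h1 : G.neighborSet v ∩ ↑X = ↑(X.filter (fun u => G.Adj v u)) := by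
    ext u
    simp only [Set.mem_inter_iff, SimpleGraph.mem_neighborSet, Finset.coe_filter,
      Set.mem_setOf_eq, Finset.mem_coe, Finset.mem_filter]
    tauto
  rw [h1, Set.ncard_coe_finset]
  rfl

end Final


/-- For every ordered graph `H` and every `ε > 0`, there exists `δ > 0`
such that every `H`-free ordered graph `G` has a set `X` of at least `δ|G|` vertices
such that in one of `G[X]`, its complement, every vertex of `X` has degree less than
`ε|X|`. -/
theorem stmt_4 {W : Type} [Fintype W] [LinearOrder W] (H : SimpleGraph W)
    (ε : ℝ) (hε : 0 < ε) :
    ∃ δ : ℝ, 0 < δ ∧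
      ∀ (V : Type) [Fintype V] [LinearOrder V] (G : SimpleGraph V),
        ¬ OrdGraphContains G H →
          ∃ X : Set V, δ * (Fintype.card V : ℝ) ≤ (X.ncard : ℝ) ∧
            ((∀ v ∈ X, ((G.neighborSet v ∩ X).ncard : ℝ) < ε * (X.ncard : ℝ)) ∨
             (∀ v ∈ X, (((Gᶜ).neighborSet v ∩ X).ncard : ℝ) < ε * (X.ncard : ℝ))) := by
  classical
  set h := Fintype.card W with hh_def
  rcases Nat.eq_zero_or_pos h with h0 | hh
  · -- W is empty: every graph contains H
    refine ⟨1, one_pos, ?_⟩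
    intro V _ _ G hfree
    exfalso
    have hWempty : IsEmpty W := Fintype.card_eq_zero_iff.mp h0
    exact hfree ⟨fun a => (hWempty.false a).elim,
      fun a => (hWempty.false a).elim, fun a => (hWempty.false a).elim⟩
  · -- main case
    set eps := min ε 1 with heps_def
    have heps0 : 0 < eps := lt_min hε one_pos
    have heps1 : eps ≤ 1 := min_le_right _ _
    set T₀ := ⌈(8:ℝ)/eps⌉₊ with hT₀def
    have hT₀real : (8:ℝ)/eps ≤ (T₀ : ℝ) := Nat.le_ceil _
    have hT₀pos : 0 < T₀ := by
      rw [hT₀def]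
      apply Nat.ceil_pos.mpr
      positivity
    set ep := min (eps^2/8) (1/2 : ℝ) with hep_def
    have hep0 : 0 < ep := lt_min (by positivity) (by norm_num)
    have hep12 : ep ≤ 1/2 := min_le_right _ _
    have hepeps : ep ≤ eps^2/8 := min_le_left _ _
    obtain ⟨β, hβpos, hβ1, hiter⟩ := iter H h hh hh_def.symm (2 * T₀) ep hep0 hep12
    set δ := β / (2 * h) with hδdef
    have hδpos : 0 < δ := by
      rw [hδdef]
      have : (0:ℝ) < (h:ℝ) := by exact_mod_cast hh
      positivity
    refine ⟨δ, hδpos, ?_⟩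
    intro V _ _ G hfree
    set n := Fintype.card V with hndef
    by_cases hbig : (2 * h : ℝ) ≤ β * (n : ℝ)
    · -- large case
      have huniv : (Finset.univ : Finset V).card = n := Finset.card_univ
      obtain ⟨m, S, τ, hmlb, hSsub, hScard, hSdisj, hScross⟩ :=
        hiter V G Finset.univ hfree (by rw [huniv]; exact hbig)
      rw [huniv] at hmlb
      have hmpos : 0 < m := by
        have h1 : (0:ℝ) < (m:ℝ) := by
          have h2 : (0:ℝ) < 2 * (h:ℝ) := by
            have : (0:ℝ) < (h:ℝ) := by exact_mod_cast hh
            linarith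
          linarith
        exact_mod_cast h1
      -- pigeonhole on τ
      have hfilters : ((Finset.range (2*T₀)).filter (fun i => τ i = true)).card +
          ((Finset.range (2*T₀)).filter (fun i => τ i = false)).card = 2*T₀ := by
        have h1 := Finset.card_filter_add_card_filter_not
          (s := Finset.range (2*T₀)) (p := fun i => τ i = true)
        rw [Finset.card_range] at h1
        have h2 : (Finset.range (2*T₀)).filter (fun i => ¬ τ i = true) =
            (Finset.range (2*T₀)).filter (fun i => τ i = false) := by
          apply Finset.filter_congr
          intro i _
          simp
        rw [h2] at h1
        exact h1
      have hpig : ∃ b : Bool, T₀ ≤ ((Finset.range (2*T₀)).filter (fun i => τ i = b)).card := by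
        by_contra hc
        push_neg at hc
        have hc1 := hc true
        have hc2 := hc false
        omega
      obtain ⟨b, hb⟩ := hpig
      obtain ⟨Q, hQsub, hQcard⟩ := Finset.exists_subset_card_eq hb
      have hQtau : ∀ i ∈ Q, τ i = b := fun i hi => (Finset.mem_filter.mp (hQsub hi)).2
      have hQrange : ∀ i ∈ Q, i < 2*T₀ :=
        fun i hi => Finset.mem_range.mp (Finset.mem_filter.mp (hQsub hi)).1
      set G2 := if b then G else Gᶜ with hG2
      have hG2cases : (b = true ∧ G2 = G) ∨ (b = false ∧ G2 = Gᶜ) := by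
        cases b
        · right
          refine ⟨rfl, ?_⟩
          rw [hG2]
          simp
        · left
          refine ⟨rfl, ?_⟩
          rw [hG2]
          simp
      have hcross2 : ∀ i ∈ Q, ∀ j ∈ Q, i < j → ∀ v ∈ S i,
          (degF G2 v (S j) : ℝ) ≤ ep * m := by
        intro i hi j hj hij v hv
        have hcr := hScross i j hij (hQrange j hj) v hv
        have hvnot : v ∉ S j :=
          fun hc => (Finset.disjoint_left.mp (hSdisj i j hij (hQrange j hj))) hv hc
        rcases hG2cases with ⟨hbt, hg⟩ | ⟨hbt, hg⟩
        · rw [hg]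
          exact hcr.1 (by rw [hQtau i hi, hbt])
        · rw [hg]
          have h1 := hcr.2 (by rw [hQtau i hi, hbt])
          have h2 : degF Gᶜ v (S j) = ndegF G v (S j) := degF_compl G v (S j) hvnot
          have h3 : (degF G v (S j) : ℝ) + (ndegF G v (S j) : ℝ) = ((S j).card : ℝ) := by
            exact_mod_cast degF_add_ndegF G v (S j)
          rw [hScard j (hQrange j hj)] at h3
          rw [h2]
          linarith
      obtain ⟨X', hX'sub, hX'card, hX'deg⟩ := cleanup G2 Q m hmpos S eps ep heps0 heps1
        (le_of_lt hep0) hepeps (by rw [hQcard]; exact hT₀real)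
        (fun i hi => hScard i (hQrange i hi))
        (fun i hi j hj hij => by
          rcases Nat.lt_or_ge i j with h1 | h1
          · exact hSdisj i j h1 (hQrange j hj)
          · exact (hSdisj j i (by omega) (hQrange i hi)).symm)
        hcross2
      refine ⟨↑X', ?_, ?_⟩
      · rw [Set.ncard_coe_finset]
        have h1 : (T₀ : ℝ) * m / 2 ≤ (X'.card : ℝ) := by
          rw [← hQcard]
          exact hX'card
        have h2 : (m : ℝ) / 2 ≤ (T₀:ℝ) * m / 2 := by
          have h3 : (1:ℝ) ≤ (T₀:ℝ) := by exact_mod_cast hT₀pos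
          have h4 : (0:ℝ) ≤ (m:ℝ) := Nat.cast_nonneg _
          apply div_le_div_of_nonneg_right _ (by norm_num)
          nlinarith
        have h5 : δ * (n:ℝ) ≤ (m:ℝ)/2 := by
          rw [hδdef]
          have h6 : (1:ℝ) ≤ (h:ℝ) := by exact_mod_cast hh
          have h7 : (0:ℝ) ≤ (n:ℝ) := Nat.cast_nonneg _
          have h8 : β / (2*h) * n ≤ β * n / 2 := by
            rw [div_mul_eq_mul_div, div_le_div_iff₀ (by linarith) (by norm_num)]
            nlinarith [mul_nonneg (le_of_lt hβpos) h7]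
          linarith
        linarith
      · -- degree condition
        have hkey : ∀ v ∈ X', ((G2.neighborSet v ∩ ↑X').ncard : ℝ) < ε * ((↑X' : Set V).ncard : ℝ) := by
          intro v hv
          rw [ncard_neighbor_inter, Set.ncard_coe_finset]
          have h1 := hX'deg v hv
          have h2 : eps * (X'.card : ℝ) ≤ ε * (X'.card : ℝ) := by
            apply mul_le_mul_of_nonneg_right (min_le_left _ _) (Nat.cast_nonneg _)
          linarith
        rcases hG2cases with ⟨hbt, hg⟩ | ⟨hbt, hg⟩
        · left
          intro v hv
          have := hkey v hv
          rwa [hg] at this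
        · right
          intro v hv
          have := hkey v hv
          rwa [hg] at this
    · -- small case
      push_neg at hbig
      rcases Nat.eq_zero_or_pos n with hn0 | hnpos
      · refine ⟨(∅ : Set V), ?_, Or.inl ?_⟩
        · rw [hn0]
          simp
        · intro v hv
          exact absurd hv (Set.notMem_empty v)
      · have hVne : Nonempty V := by
          rw [hndef] at hnpos
          exact Fintype.card_pos_iff.mp hnpos
        obtain ⟨v₀⟩ := hVne
        refine ⟨({v₀} : Set V), ?_, Or.inl ?_⟩
        · rw [Set.ncard_singleton]
          have h1 : δ * (n:ℝ) ≤ 1 := by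
            rw [hδdef]
            have h2 : (0:ℝ) < 2 * (h:ℝ) := by
              have : (0:ℝ) < (h:ℝ) := by exact_mod_cast hh
              linarith
            rw [div_mul_eq_mul_div, div_le_one h2]
            have h3 : β * n < 2 * h := hbig
            linarith
          exact_mod_cast h1
        · intro v hv
          rw [Set.mem_singleton_iff] at hv
          subst hv
          have h1 : G.neighborSet v ∩ {v} = ∅ := by
            ext u
            simp only [Set.mem_inter_iff, SimpleGraph.mem_neighborSet, Set.mem_singleton_iff,
              Set.mem_empty_iff_false, iff_false, not_and]
            intro hadj hu
            subst hu
            exact G.irrefl hadj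
          rw [h1]
          simp only [Set.ncard_empty, Nat.cast_zero, Set.ncard_singleton, Nat.cast_one, mul_one]
          exact hε
end

section
/- Let (B_i : i∈I) be a blockade in a graph G, let 0 < φ, μ ≤ 1, and let β = μ^{1 + |I|²/φ}. Then either (a) there exist distinct h, j ∈ I and subsets B_h' ⊆ B_h and B_j' ⊆ B_j with |B_h'|/|B_h|, |B_j'|/|B_j| ≥ β such that B_h' is anticomplete to B_j'; or (b) there is a (φ,μ)-shrink-resistant contraction (B_i' : i∈I) of (B_i : i∈I) such that |B_i'| ≥ β|B_i| for each i ∈ I. -/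
section Aux

variable {V : Type} [Fintype V] (G : SimpleGraph V)

lemma maxDegFrom_le_ncard (X Y : Set V) : maxDegFrom G X Y ≤ Y.ncard := by
  apply csSup_le'
  rintro b ⟨v, hv, rfl⟩
  exact Set.ncard_le_ncard Set.inter_subset_right Y.toFinite

lemma le_maxDegFrom {X : Set V} (Y : Set V) {v : V} (hv : v ∈ X) :
    (G.neighborSet v ∩ Y).ncard ≤ maxDegFrom G X Y := by
  apply le_csSup
  · refine ⟨Y.ncard, ?_⟩
    rintro b ⟨w, hw, rfl⟩
    exact Set.ncard_le_ncard Set.inter_subset_right Y.toFinite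
  · exact ⟨v, hv, rfl⟩

lemma maxDegFrom_mono {X' X Y' Y : Set V} (hX : X' ⊆ X) (hY : Y' ⊆ Y) :
    maxDegFrom G X' Y' ≤ maxDegFrom G X Y := by
  apply csSup_le'
  rintro b ⟨v, hv, rfl⟩
  calc (G.neighborSet v ∩ Y').ncard ≤ (G.neighborSet v ∩ Y).ncard :=
        Set.ncard_le_ncard (Set.inter_subset_inter_right _ hY) (G.neighborSet v ∩ Y).toFinite
    _ ≤ maxDegFrom G X Y := le_maxDegFrom G Y (hX hv)

lemma anticomp_of_maxDegFrom_eq_zero {X Y : Set V} (h : maxDegFrom G X Y = 0) :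
    AnticompSets G X Y := by
  intro x hx y hy hadj
  have h1 : (G.neighborSet x ∩ Y).ncard ≤ maxDegFrom G X Y := le_maxDegFrom G Y hx
  have h2 : 0 < (G.neighborSet x ∩ Y).ncard :=
    (Set.ncard_pos (Set.toFinite _)).mpr ⟨y, hadj, hy⟩
  omega

end Aux

lemma sum_t_bound (I : Finset ℤ) (t : ℤ → ℤ → ℕ) {phi : ℝ}
    (hphi0 : 0 < phi) (hphi1 : phi ≤ 1)
    (hT : ∀ h j : ℤ, t h j ≤ Nat.floor (1/phi) + 1) (hdiag : ∀ i : ℤ, t i i = 0)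
    {i : ℤ} (hi : i ∈ I) :
    ((∑ j ∈ I, (t i j + t j i) : ℕ) : ℝ) ≤ (I.card : ℝ) ^ 2 / phi := by
  set T : ℕ := Nat.floor (1/phi) + 1 with hTdef
  have hsum : (∑ j ∈ I, (t i j + t j i)) ≤ (I.card - 1) * (2 * T) := by
    have hsplit : (t i i + t i i) + ∑ j ∈ I.erase i, (t i j + t j i)
        = ∑ j ∈ I, (t i j + t j i) := Finset.add_sum_erase I (fun j => t i j + t j i) hi
    have hbound : ∑ j ∈ I.erase i, (t i j + t j i) ≤ (I.erase i).card * (2 * T) := by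
      calc ∑ j ∈ I.erase i, (t i j + t j i) ≤ ∑ _j ∈ I.erase i, (2 * T) :=
            Finset.sum_le_sum (fun j _ => by have := hT i j; have := hT j i; omega)
        _ = (I.erase i).card * (2 * T) := by rw [Finset.sum_const, smul_eq_mul]
    rw [Finset.card_erase_of_mem hi] at hbound
    have h0 : t i i = 0 := hdiag i
    omega
  have hk1 : 1 ≤ I.card := Finset.card_pos.mpr ⟨i, hi⟩
  have hcast : ((∑ j ∈ I, (t i j + t j i) : ℕ) : ℝ) ≤ ((I.card : ℝ) - 1) * (2 * (T : ℝ)) := by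
    have := (Nat.cast_le (α := ℝ)).mpr hsum
    push_cast [Nat.cast_sub hk1] at this ⊢
    linarith
  have hTle : (T : ℝ) ≤ 1/phi + 1 := by
    have := Nat.floor_le (le_of_lt (by positivity : (0:ℝ) < 1/phi))
    push_cast [hTdef]
    linarith
  have hkR : (1 : ℝ) ≤ (I.card : ℝ) := by exact_mod_cast hk1
  have hfin : ((I.card : ℝ) - 1) * (2 * (1/phi + 1)) ≤ (I.card : ℝ) ^ 2 / phi := by
    rw [le_div_iff₀ hphi0]
    have hinv : (1/phi) * phi = 1 := by field_simp
    nlinarith [sq_nonneg ((I.card : ℝ) - 2), hphi0.le, hphi1, hkR]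
  calc ((∑ j ∈ I, (t i j + t j i) : ℕ) : ℝ) ≤ ((I.card : ℝ) - 1) * (2 * (T : ℝ)) := hcast
    _ ≤ ((I.card : ℝ) - 1) * (2 * (1/phi + 1)) := by nlinarith [hkR]
    _ ≤ (I.card : ℝ) ^ 2 / phi := hfin
lemma shrink_loop {V : Type} [Fintype V] (G : SimpleGraph V) (I : Finset ℤ) (B : ℤ → Set V)
    (phi mu : ℝ) (hphi0 : 0 < phi) (hphi1 : phi ≤ 1) (hmu0 : 0 < mu) (hmu1 : mu ≤ 1)
    (hn2 : 2 ≤ Fintype.card V) (fuel : ℕ) :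
    ∀ (B' : ℤ → Set V) (t : ℤ → ℤ → ℕ),
    (∀ i ∈ I, B' i ⊆ B i ∧ (B' i).Nonempty) →
    (∀ h ∈ I, ∀ j ∈ I, h ≠ j →
        (maxDegFrom G (B' h) (B' j) : ℝ)
          ≤ (Fintype.card V : ℝ) ^ ((1:ℝ) - phi * (t h j))) →
    (∀ h j : ℤ, t h j ≤ Nat.floor (1/phi) + 1) →
    (∀ i : ℤ, t i i = 0) →
    (∀ i ∈ I, mu ^ ((∑ j ∈ I, (t i j + t j i) : ℕ) : ℝ) * ((B i).ncard : ℝ)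
        ≤ ((B' i).ncard : ℝ)) →
    (∑ p ∈ I ×ˢ I, (Nat.floor (1/phi) + 1 - t p.1 p.2)) ≤ fuel →
    ((∃ h ∈ I, ∃ j ∈ I, h ≠ j ∧ ∃ Bh' ⊆ B h, ∃ Bj' ⊆ B j,
        mu ^ ((1 : ℝ) + (I.card : ℝ) ^ 2 / phi) * ((B h).ncard : ℝ) ≤ (Bh'.ncard : ℝ) ∧
        mu ^ ((1 : ℝ) + (I.card : ℝ) ^ 2 / phi) * ((B j).ncard : ℝ) ≤ (Bj'.ncard : ℝ) ∧
        AnticompSets G Bh' Bj') ∨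
    (∃ B'' : ℤ → Set V, (∀ i ∈ I, B'' i ⊆ B i ∧ (B'' i).Nonempty) ∧
        ShrinkResistant G I B'' phi mu ∧
        ∀ i ∈ I, mu ^ ((1 : ℝ) + (I.card : ℝ) ^ 2 / phi) * ((B i).ncard : ℝ)
          ≤ ((B'' i).ncard : ℝ))) := by
  induction fuel using Nat.strong_induction_on with
  | _ fuel ih =>
  intro B' t hsub hdeg hT hdiag hsize hfuel
  set n : ℕ := Fintype.card V with hn
  have hn1 : (1:ℝ) < (n:ℝ) := by exact_mod_cast hn2
  have hn0 : (0:ℝ) < (n:ℝ) := by linarith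
  -- key exponent comparison for outcomes
  have hexp : ∀ i ∈ I, mu ^ ((1 : ℝ) + (I.card : ℝ) ^ 2 / phi)
      ≤ mu * mu ^ ((∑ j ∈ I, (t i j + t j i) : ℕ) : ℝ) := by
    intro i hi
    have hS := sum_t_bound I t hphi0 hphi1 hT hdiag hi
    have h1 : mu ^ ((1 : ℝ) + (I.card : ℝ) ^ 2 / phi)
        ≤ mu ^ ((1:ℝ) + ((∑ j ∈ I, (t i j + t j i) : ℕ) : ℝ)) :=
      Real.rpow_le_rpow_of_exponent_ge hmu0 hmu1 (by linarith)
    have h2 : mu ^ ((1:ℝ) + ((∑ j ∈ I, (t i j + t j i) : ℕ) : ℝ))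
        = mu * mu ^ ((∑ j ∈ I, (t i j + t j i) : ℕ) : ℝ) := by
      rw [Real.rpow_add hmu0, Real.rpow_one]
    rw [h2] at h1
    exact h1
  by_cases hsr : ShrinkResistant G I B' phi mu
  · right
    refine ⟨B', hsub, hsr, fun i hi => ?_⟩
    have hBpos : (0:ℝ) ≤ ((B i).ncard : ℝ) := by positivity
    have h1 := hexp i hi
    have h2 := hsize i hi
    have h3 : mu * mu ^ ((∑ j ∈ I, (t i j + t j i) : ℕ) : ℝ)
        ≤ mu ^ ((∑ j ∈ I, (t i j + t j i) : ℕ) : ℝ) := by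
      nlinarith [Real.rpow_pos_of_pos hmu0 ((∑ j ∈ I, (t i j + t j i) : ℕ) : ℝ)]
    calc mu ^ ((1 : ℝ) + (I.card : ℝ) ^ 2 / phi) * ((B i).ncard : ℝ)
        ≤ mu ^ ((∑ j ∈ I, (t i j + t j i) : ℕ) : ℝ) * ((B i).ncard : ℝ) := by
          apply mul_le_mul_of_nonneg_right _ hBpos; linarith
      _ ≤ ((B' i).ncard : ℝ) := h2
  · -- not shrink-resistant: extract a failing pair
    unfold ShrinkResistant at hsr
    push_neg at hsr
    obtain ⟨h, hh, j, hj, hhj, X, hXsub, Y, hYsub, hXbig, hYbig, hfail⟩ := hsr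
    have hBh := hsub h hh; have hBj := hsub j hj
    have hBhpos : (0:ℝ) < ((B' h).ncard : ℝ) := by
      exact_mod_cast (Set.ncard_pos (Set.toFinite _)).mpr hBh.2
    have hBjpos : (0:ℝ) < ((B' j).ncard : ℝ) := by
      exact_mod_cast (Set.ncard_pos (Set.toFinite _)).mpr hBj.2
    have hXbig' : mu * mu ^ ((∑ b ∈ I, (t h b + t b h) : ℕ) : ℝ) * ((B h).ncard : ℝ)
        ≤ (X.ncard : ℝ) := by
      have := hsize h hh
      nlinarith [hmu0]
    have hYbig' : mu * mu ^ ((∑ b ∈ I, (t j b + t b j) : ℕ) : ℝ) * ((B j).ncard : ℝ)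
        ≤ (Y.ncard : ℝ) := by
      have := hsize j hj
      nlinarith [hmu0]
    by_cases hzero : maxDegFrom G X Y = 0
    · -- outcome (a)
      left
      refine ⟨h, hh, j, hj, hhj, X, hXsub.trans hBh.1, Y, hYsub.trans hBj.1, ?_, ?_,
        anticomp_of_maxDegFrom_eq_zero G hzero⟩
      · calc mu ^ ((1 : ℝ) + (I.card : ℝ) ^ 2 / phi) * ((B h).ncard : ℝ)
            ≤ mu * mu ^ ((∑ b ∈ I, (t h b + t b h) : ℕ) : ℝ) * ((B h).ncard : ℝ) := by
              apply mul_le_mul_of_nonneg_right (hexp h hh) (by positivity)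
          _ ≤ (X.ncard : ℝ) := hXbig'
      · calc mu ^ ((1 : ℝ) + (I.card : ℝ) ^ 2 / phi) * ((B j).ncard : ℝ)
            ≤ mu * mu ^ ((∑ b ∈ I, (t j b + t b j) : ℕ) : ℝ) * ((B j).ncard : ℝ) := by
              apply mul_le_mul_of_nonneg_right (hexp j hj) (by positivity)
          _ ≤ (Y.ncard : ℝ) := hYbig'
    · -- do a shrink step
      have hBhcard : (0:ℝ) < ((B h).ncard : ℝ) := by
        have : ((B' h).ncard : ℝ) ≤ ((B h).ncard : ℝ) := by
          exact_mod_cast Set.ncard_le_ncard hBh.1 (B h).toFinite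
        linarith
      have hBjcard : (0:ℝ) < ((B j).ncard : ℝ) := by
        have : ((B' j).ncard : ℝ) ≤ ((B j).ncard : ℝ) := by
          exact_mod_cast Set.ncard_le_ncard hBj.1 (B j).toFinite
        linarith
      have hXne : X.Nonempty := by
        rw [← Set.ncard_pos (Set.toFinite _)]
        by_contra hc
        have h0 : (X.ncard : ℝ) = 0 := by
          have : X.ncard = 0 := by omega
          exact_mod_cast this
        linarith [hXbig', h0, mul_pos (mul_pos hmu0
          (Real.rpow_pos_of_pos hmu0 ((∑ b ∈ I, (t h b + t b h) : ℕ) : ℝ))) hBhcard]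
      have hYne : Y.Nonempty := by
        rw [← Set.ncard_pos (Set.toFinite _)]
        by_contra hc
        have h0 : (Y.ncard : ℝ) = 0 := by
          have : Y.ncard = 0 := by omega
          exact_mod_cast this
        linarith [hYbig', h0, mul_pos (mul_pos hmu0
          (Real.rpow_pos_of_pos hmu0 ((∑ b ∈ I, (t j b + t b j) : ℕ) : ℝ))) hBjcard]
      have hdXY : (maxDegFrom G X Y : ℝ)
          ≤ (n:ℝ) ^ ((1:ℝ) - phi * ((t h j : ℕ) + 1)) := by
        have h1 : (maxDegFrom G X Y : ℝ)
            ≤ (maxDegFrom G (B' h) (B' j) : ℝ) * (n:ℝ) ^ (-phi) := hfail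
        have h2 : (maxDegFrom G (B' h) (B' j) : ℝ) * (n:ℝ) ^ (-phi)
            ≤ (n:ℝ) ^ ((1:ℝ) - phi * (t h j)) * (n:ℝ) ^ (-phi) := by
          apply mul_le_mul_of_nonneg_right (hdeg h hh j hj hhj)
          positivity
        have h3 : (n:ℝ) ^ ((1:ℝ) - phi * (t h j)) * (n:ℝ) ^ (-phi)
            = (n:ℝ) ^ ((1:ℝ) - phi * ((t h j : ℕ) + 1)) := by
          rw [← Real.rpow_add hn0]; ring_nf
        linarith [h1, h2, h3.le]
      have hone : (1:ℝ) ≤ (maxDegFrom G X Y : ℝ) := by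
        have : 1 ≤ maxDegFrom G X Y := Nat.one_le_iff_ne_zero.mpr hzero
        exact_mod_cast this
      have hexp0 : (0:ℝ) ≤ (1:ℝ) - phi * ((t h j : ℕ) + 1) := by
        by_contra hc
        push_neg at hc
        have := Real.rpow_lt_one_of_one_lt_of_neg hn1 hc
        linarith
      have htlt : t h j + 1 ≤ Nat.floor (1/phi) := by
        apply Nat.le_floor
        rw [le_div_iff₀ hphi0]
        push_cast
        nlinarith
      -- new blockade and counter
      set B'' : ℤ → Set V := fun a => if a = h then X else if a = j then Y else B' a with hB''
      set t'' : ℤ → ℤ → ℕ := fun a b => if a = h ∧ b = j then t h j + 1 else t a b with ht''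
      have hB''h : B'' h = X := by simp [hB'']
      have hB''j : B'' j = Y := by simp [hB'', hhj.symm]
      have hB''other : ∀ a, a ≠ h → a ≠ j → B'' a = B' a := by
        intro a ha1 ha2; simp [hB'', ha1, ha2]
      have hB''sub : ∀ a, B'' a ⊆ B' a := by
        intro a
        by_cases ha1 : a = h
        · subst ha1; rw [hB''h]; exact hXsub
        by_cases ha2 : a = j
        · subst ha2; rw [hB''j]; exact hYsub
        · rw [hB''other a ha1 ha2]
      -- sums of new counters
      have hSh : (∑ b ∈ I, (t'' h b + t'' b h)) = (∑ b ∈ I, (t h b + t b h)) + 1 := by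
        have key : ∀ b ∈ I, t'' h b + t'' b h
            = (t h b + t b h) + (if b = j then 1 else 0) := by
          intro b _
          by_cases hb : b = j
          · subst hb
            have e1 : t'' h b = t h b + 1 := by simp [ht'']
            have e2 : t'' b h = t b h := by simp [ht'', Ne.symm hhj]
            rw [e1, e2, if_pos rfl]
            omega
          · have e1 : t'' h b = t h b := by simp [ht'', hb]
            have e2 : t'' b h = t b h := by simp [ht'', hhj]
            rw [e1, e2, if_neg hb]
            omega
        rw [Finset.sum_congr rfl key, Finset.sum_add_distrib, Finset.sum_ite_eq' I j]
        simp [hj]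
      have hSj : (∑ b ∈ I, (t'' j b + t'' b j)) = (∑ b ∈ I, (t j b + t b j)) + 1 := by
        have key : ∀ b ∈ I, t'' j b + t'' b j
            = (t j b + t b j) + (if b = h then 1 else 0) := by
          intro b _
          by_cases hb : b = h
          · subst hb
            have e1 : t'' j b = t j b := by simp [ht'', Ne.symm hhj]
            have e2 : t'' b j = t b j + 1 := by simp [ht'']
            rw [e1, e2, if_pos rfl]
            omega
          · have e1 : t'' j b = t j b := by simp [ht'', Ne.symm hhj]
            have e2 : t'' b j = t b j := by simp [ht'', hb]
            rw [e1, e2, if_neg hb]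
            omega
        rw [Finset.sum_congr rfl key, Finset.sum_add_distrib, Finset.sum_ite_eq' I h]
        simp [hh]
      have hSother : ∀ i, i ≠ h → i ≠ j →
          (∑ b ∈ I, (t'' i b + t'' b i)) = (∑ b ∈ I, (t i b + t b i)) := by
        intro i hi1 hi2
        apply Finset.sum_congr rfl
        intro b _
        have e1 : t'' i b = t i b := by simp [ht'', hi1]
        have e2 : t'' b i = t b i := by simp [ht'', hi2]
        rw [e1, e2]
      -- invariants for the new state
      have hsub'' : ∀ i ∈ I, B'' i ⊆ B i ∧ (B'' i).Nonempty := by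
        intro i hi
        refine ⟨(hB''sub i).trans (hsub i hi).1, ?_⟩
        by_cases hi1 : i = h
        · subst hi1; rw [hB''h]; exact hXne
        by_cases hi2 : i = j
        · subst hi2; rw [hB''j]; exact hYne
        · rw [hB''other i hi1 hi2]; exact (hsub i hi).2
      have hdeg'' : ∀ a ∈ I, ∀ b ∈ I, a ≠ b →
          (maxDegFrom G (B'' a) (B'' b) : ℝ) ≤ (n:ℝ) ^ ((1:ℝ) - phi * (t'' a b)) := by
        intro a ha b hb hab
        by_cases hp : a = h ∧ b = j
        · obtain ⟨rfl, rfl⟩ := hp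
          rw [hB''h, hB''j]
          have : t'' a b = t a b + 1 := by simp [ht'']
          rw [this]
          push_cast
          exact hdXY
        · have ht''ab : t'' a b = t a b := by simp only [ht'', if_neg hp]
          rw [ht''ab]
          calc (maxDegFrom G (B'' a) (B'' b) : ℝ)
              ≤ (maxDegFrom G (B' a) (B' b) : ℝ) := by
                exact_mod_cast maxDegFrom_mono G (hB''sub a) (hB''sub b)
            _ ≤ (n:ℝ) ^ ((1:ℝ) - phi * (t a b)) := hdeg a ha b hb hab
      have hT'' : ∀ a b : ℤ, t'' a b ≤ Nat.floor (1/phi) + 1 := by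
        intro a b
        by_cases hp : a = h ∧ b = j
        · obtain ⟨rfl, rfl⟩ := hp
          have e1 : t'' a b = t a b + 1 := by simp [ht'']
          omega
        · have e1 : t'' a b = t a b := by simp only [ht'', if_neg hp]
          rw [e1]
          exact hT a b
      have hdiag'' : ∀ i : ℤ, t'' i i = 0 := by
        intro i
        have hne : ¬(i = h ∧ i = j) := by rintro ⟨rfl, rfl⟩; exact hhj rfl
        have e1 : t'' i i = t i i := by simp only [ht'', if_neg hne]
        rw [e1]
        exact hdiag i
      have hsize'' : ∀ i ∈ I, mu ^ ((∑ b ∈ I, (t'' i b + t'' b i) : ℕ) : ℝ) * ((B i).ncard : ℝ)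
          ≤ ((B'' i).ncard : ℝ) := by
        intro i hi
        by_cases hi1 : i = h
        · subst hi1
          rw [hB''h, hSh]
          have : mu ^ (((∑ b ∈ I, (t i b + t b i)) + 1 : ℕ) : ℝ)
              = mu * mu ^ ((∑ b ∈ I, (t i b + t b i) : ℕ) : ℝ) := by
            push_cast
            rw [Real.rpow_add hmu0, Real.rpow_one]
            ring
          rw [this]
          exact hXbig'
        by_cases hi2 : i = j
        · subst hi2
          rw [hB''j, hSj]
          have : mu ^ (((∑ b ∈ I, (t i b + t b i)) + 1 : ℕ) : ℝ)
              = mu * mu ^ ((∑ b ∈ I, (t i b + t b i) : ℕ) : ℝ) := by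
            push_cast
            rw [Real.rpow_add hmu0, Real.rpow_one]
            ring
          rw [this]
          exact hYbig'
        · rw [hB''other i hi1 hi2, hSother i hi1 hi2]
          exact hsize i hi
      -- fuel decreases
      have hmem : (h, j) ∈ I ×ˢ I := Finset.mem_product.mpr ⟨hh, hj⟩
      have hfuel'' : (∑ p ∈ I ×ˢ I, (Nat.floor (1/phi) + 1 - t'' p.1 p.2)) + 1
          ≤ (∑ p ∈ I ×ˢ I, (Nat.floor (1/phi) + 1 - t p.1 p.2)) := by
        have e1 : (Nat.floor (1/phi) + 1 - t'' h j) + ∑ p ∈ (I ×ˢ I).erase (h, j),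
            (Nat.floor (1/phi) + 1 - t'' p.1 p.2)
            = ∑ p ∈ I ×ˢ I, (Nat.floor (1/phi) + 1 - t'' p.1 p.2) :=
          Finset.add_sum_erase _ (fun p => Nat.floor (1/phi) + 1 - t'' p.1 p.2) hmem
        have e2 : (Nat.floor (1/phi) + 1 - t h j) + ∑ p ∈ (I ×ˢ I).erase (h, j),
            (Nat.floor (1/phi) + 1 - t p.1 p.2)
            = ∑ p ∈ I ×ˢ I, (Nat.floor (1/phi) + 1 - t p.1 p.2) :=
          Finset.add_sum_erase _ (fun p => Nat.floor (1/phi) + 1 - t p.1 p.2) hmem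
        have e3 : ∑ p ∈ (I ×ˢ I).erase (h, j), (Nat.floor (1/phi) + 1 - t'' p.1 p.2)
            = ∑ p ∈ (I ×ˢ I).erase (h, j), (Nat.floor (1/phi) + 1 - t p.1 p.2) := by
          apply Finset.sum_congr rfl
          intro p hp
          have hpne : p ≠ (h, j) := Finset.ne_of_mem_erase hp
          have hne : ¬(p.1 = h ∧ p.2 = j) := by
            rintro ⟨h1, h2⟩
            exact hpne (Prod.ext h1 h2)
          have e1 : t'' p.1 p.2 = t p.1 p.2 := by simp only [ht'', if_neg hne]
          rw [e1]
        have e4 : t'' h j = t h j + 1 := by simp [ht'']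
        omega
      -- recurse
      rcases Nat.eq_zero_or_pos fuel with hf0 | hfpos
      · omega
      · exact ih (fuel - 1) (by omega) B'' t'' hsub'' hdeg'' hT'' hdiag'' hsize'' (by omega)
/-- If `(B i : i ∈ I)` is a blockade in `G`, `0 < φ, μ ≤ 1`, and
`β = μ^(1 + |I|²/φ)`, then either there are distinct `h, j ∈ I` and anticomplete
subsets `B_h' ⊆ B h`, `B_j' ⊆ B j` with `|B_h'|/|B h|, |B_j'|/|B j| ≥ β`, or there is
a `(φ,μ)`-shrink-resistant contraction `(B' i : i ∈ I)` with `|B' i| ≥ β|B i|`. -/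
theorem stmt_5 {V : Type} [Fintype V] (G : SimpleGraph V) (I : Finset ℤ)
    (B : ℤ → Set V) (hB : IsBlockade I B)
    (phi mu : ℝ) (hphi0 : 0 < phi) (hphi1 : phi ≤ 1) (hmu0 : 0 < mu) (hmu1 : mu ≤ 1) :
    (∃ h ∈ I, ∃ j ∈ I, h ≠ j ∧ ∃ Bh' ⊆ B h, ∃ Bj' ⊆ B j,
        mu ^ ((1 : ℝ) + (I.card : ℝ) ^ 2 / phi) * ((B h).ncard : ℝ) ≤ (Bh'.ncard : ℝ) ∧
        mu ^ ((1 : ℝ) + (I.card : ℝ) ^ 2 / phi) * ((B j).ncard : ℝ) ≤ (Bj'.ncard : ℝ) ∧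
        AnticompSets G Bh' Bj') ∨
    (∃ B' : ℤ → Set V, (∀ i ∈ I, B' i ⊆ B i ∧ (B' i).Nonempty) ∧
        ShrinkResistant G I B' phi mu ∧
        ∀ i ∈ I, mu ^ ((1 : ℝ) + (I.card : ℝ) ^ 2 / phi) * ((B i).ncard : ℝ)
          ≤ ((B' i).ncard : ℝ)) := by
  by_cases hk : I.card ≤ 1
  · right
    refine ⟨B, fun i hi => ⟨subset_rfl, hB.1 i hi⟩, ?_, ?_⟩
    · intro h hh j hj hne X _ Y _ _ _
      exact absurd (Finset.one_lt_card.mpr ⟨h, hh, j, hj, hne⟩) (by omega)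
    · intro i hi
      have he : (0:ℝ) ≤ 1 + (I.card:ℝ)^2/phi := by positivity
      have h1 : mu ^ ((1:ℝ) + (I.card:ℝ)^2/phi) ≤ 1 := Real.rpow_le_one hmu0.le hmu1 he
      exact mul_le_of_le_one_left (by positivity) h1
  · push_neg at hk
    obtain ⟨a, ha, b, hb, hab⟩ := Finset.one_lt_card.mp hk
    obtain ⟨x, hx⟩ := hB.1 a ha
    obtain ⟨y, hy⟩ := hB.1 b hb
    have hxy : x ≠ y := by
      intro hcontra
      subst hcontra
      exact Set.disjoint_left.mp (hB.2 a ha b hb hab) hx hy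
    have hn2 : 2 ≤ Fintype.card V := Fintype.one_lt_card_iff.mpr ⟨x, y, hxy⟩
    refine shrink_loop G I B phi mu hphi0 hphi1 hmu0 hmu1 hn2 _ B (fun _ _ => 0)
      (fun i hi => ⟨subset_rfl, hB.1 i hi⟩) ?_ (fun _ _ => Nat.zero_le _) (fun _ => rfl) ?_ le_rfl
    · intro h hh j hj hne
      have h1 : maxDegFrom G (B h) (B j) ≤ (B j).ncard := maxDegFrom_le_ncard G _ _
      have h2 : (B j).ncard ≤ Fintype.card V := by
        have h5 := Set.ncard_le_ncard (Set.subset_univ (B j)) Set.finite_univ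
        rwa [Set.ncard_univ, Nat.card_eq_fintype_card] at h5
      have h3 : (maxDegFrom G (B h) (B j) : ℝ) ≤ (Fintype.card V : ℝ) := by
        exact_mod_cast le_trans h1 h2
      have h4 : (1:ℝ) - phi * ((0:ℕ):ℝ) = 1 := by push_cast; ring
      rw [h4, Real.rpow_one]
      exact h3
    · intro i hi
      simp
end

section
/- Let k ≥ 0 be an integer, and let 0 < c, φ, μ, σ, Σ, Λ ≤ 1 with σ < Σ < c. Then there exist λ > 0 and integers N and K ≥ 2 with the following property. Let G be a graph with |G| ≥ N such that there do not exist disjoint Z1, Z2 ⊆ V(G) with |Z1|, |Z2| ≥ |G|^{1-c} that are anticomplete to each other. Let (B_i : i∈I) be a blockade of length at least K in G, with shrinkage at most σ and linkage at most λ. Then there exist I' ⊆ I with |I'| = k and a subset B_i' ⊆ B_i for each i ∈ I' such that (B_i' : i∈I') has shrinkage at most Σ and has a (φ,μ)-band which is at most Λ. -/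
namespace Stmt8

variable {V : Type} [Fintype V] (G : SimpleGraph V)

lemma bdd_img (X Y : Set V) :
    ∀ m ∈ ((fun v => (G.neighborSet v ∩ Y).ncard) '' X), m ≤ Y.ncard := by
  rintro m ⟨u, hu, rfl⟩
  exact Set.ncard_le_ncard Set.inter_subset_right (Set.toFinite _)

lemma le_maxDegFrom {X Y : Set V} {v : V} (hv : v ∈ X) :
    (G.neighborSet v ∩ Y).ncard ≤ maxDegFrom G X Y :=
  le_csSup ⟨Y.ncard, fun m hm => bdd_img G X Y m hm⟩ ⟨v, hv, rfl⟩

lemma maxDegFrom_le (X Y : Set V) : maxDegFrom G X Y ≤ Y.ncard := by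
  rcases X.eq_empty_or_nonempty with rfl | hX
  · simp [maxDegFrom]
  · exact csSup_le (hX.image _) (bdd_img G X Y)

lemma maxDegFrom_exists {X : Set V} (Y : Set V) (hX : X.Nonempty) :
    ∃ v ∈ X, maxDegFrom G X Y = (G.neighborSet v ∩ Y).ncard := by
  have h := Nat.sSup_mem (hX.image (fun v => (G.neighborSet v ∩ Y).ncard))
    ⟨Y.ncard, fun m hm => bdd_img G X Y m hm⟩
  rcases h with ⟨v, hv, hveq⟩
  exact ⟨v, hv, hveq.symm⟩

lemma maxDegFrom_mono {X' X Y' Y : Set V} (hX : X' ⊆ X) (hY : Y' ⊆ Y) :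
    maxDegFrom G X' Y' ≤ maxDegFrom G X Y := by
  rcases X'.eq_empty_or_nonempty with rfl | hX'
  · simp [maxDegFrom]
  · apply csSup_le (hX'.image _)
    rintro m ⟨u, hu, rfl⟩
    calc (G.neighborSet u ∩ Y').ncard ≤ (G.neighborSet u ∩ Y).ncard :=
          Set.ncard_le_ncard (Set.inter_subset_inter_right _ hY) (Set.toFinite _)
      _ ≤ maxDegFrom G X Y := le_maxDegFrom G (hX hu)

/-- The anticomplete-pair counting bound. -/
lemma star {c : ℝ} (hG : NoBigAnticomp G c) {X Y : Set V} (hd : Disjoint X Y)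
    (hX : ⌈(Fintype.card V : ℝ) ^ ((1:ℝ) - c)⌉₊ ≤ X.ncard) :
    (Y.ncard : ℝ) < (⌈(Fintype.card V : ℝ) ^ ((1:ℝ) - c)⌉₊ : ℝ) * (maxDegFrom G X Y : ℝ)
      + (Fintype.card V : ℝ) ^ ((1:ℝ) - c) := by
  classical
  set s : ℕ := ⌈(Fintype.card V : ℝ) ^ ((1:ℝ) - c)⌉₊ with hs
  obtain ⟨X0, hX0sub, hX0card⟩ := Set.exists_subset_card_eq hX
  have hX0fin : X0.Finite := Set.toFinite _
  set F : Finset V := hX0fin.toFinset with hF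
  have hFcard : F.card = s := by
    rw [hF, ← Set.ncard_eq_toFinset_card _ hX0fin]; exact hX0card
  set d : ℕ := maxDegFrom G X Y with hdd
  set U : Finset V := F.biUnion (fun x => (G.neighborSet x ∩ Y).toFinset) with hU
  have hUcard : U.card ≤ s * d := by
    calc U.card ≤ ∑ x ∈ F, ((G.neighborSet x ∩ Y).toFinset).card :=
          Finset.card_biUnion_le
      _ ≤ ∑ _x ∈ F, d := by
          apply Finset.sum_le_sum
          intro x hx
          rw [← Set.ncard_eq_toFinset_card']
          exact le_maxDegFrom G (hX0sub (by rwa [hF, Set.Finite.mem_toFinset] at hx))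
      _ = s * d := by rw [Finset.sum_const, hFcard, smul_eq_mul]
  set Y' : Set V := Y \ ↑U with hY'
  have hanti : AnticompSets G X0 Y' := by
    intro x hx y hy hadj
    apply hy.2
    simp only [hU, Finset.coe_biUnion, Set.mem_iUnion]
    refine ⟨x, ?_, ?_⟩
    · simp only [Finset.mem_coe, hF, Set.Finite.mem_toFinset]
      exact hx
    · simp only [Finset.mem_coe, Set.mem_toFinset]
      exact ⟨hadj, hy.1⟩
  have hdisj : Disjoint X0 Y' := (hd.mono hX0sub Set.diff_subset)
  have hsmall : (Y'.ncard : ℝ) < (Fintype.card V : ℝ) ^ ((1:ℝ) - c) := by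
    by_contra hbig
    push_neg at hbig
    apply hG
    refine ⟨X0, Y', hdisj, hanti, ?_, hbig⟩
    rw [hX0card]
    exact_mod_cast Nat.le_ceil _
  have hYsplit : Y.ncard ≤ Y'.ncard + U.card := by
    calc Y.ncard ≤ (Y' ∪ ↑U).ncard := by
          apply Set.ncard_le_ncard _ (Set.toFinite _)
          intro y hy
          by_cases hyU : y ∈ (↑U : Set V)
          · exact Or.inr hyU
          · exact Or.inl ⟨hy, hyU⟩
      _ ≤ Y'.ncard + (↑U : Set V).ncard := Set.ncard_union_le _ _
      _ = Y'.ncard + U.card := by rw [Set.ncard_coe_finset]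
  have h1 : (Y.ncard : ℝ) ≤ (Y'.ncard : ℝ) + (U.card : ℝ) := by exact_mod_cast hYsplit
  have h2 : (U.card : ℝ) ≤ (s : ℝ) * (d : ℝ) := by exact_mod_cast hUcard
  calc (Y.ncard : ℝ) ≤ (Y'.ncard : ℝ) + (U.card : ℝ) := h1
    _ < (Fintype.card V : ℝ) ^ ((1:ℝ) - c) + (s : ℝ) * d :=
        add_lt_add_of_lt_of_le hsmall h2
    _ = (s : ℝ) * d + (Fintype.card V : ℝ) ^ ((1:ℝ) - c) := by ring


/-- Resistance of a blockade. -/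
def Res {V : Type} [Fintype V] (G : SimpleGraph V) (I₀ : Finset ℤ) (C : ℤ → Set V)
    (α ψ : ℝ) : Prop :=
  ∀ h ∈ I₀, ∀ j ∈ I₀, h ≠ j → ∀ X ⊆ C h, ∀ Y ⊆ C j,
    α * ((C h).ncard : ℝ) ≤ (X.ncard : ℝ) → α * ((C j).ncard : ℝ) ≤ (Y.ncard : ℝ) →
    (maxDegFrom G (C h) (C j) : ℝ) * ((Fintype.card V : ℝ) ^ (-ψ)) < (maxDegFrom G X Y : ℝ)

noncomputable def Phi {V : Type} [Fintype V] (G : SimpleGraph V) (I₀ : Finset ℤ)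
    (C : ℤ → Set V) : ℝ :=
  ∏ p ∈ I₀.offDiag, ((maxDegFrom G (C p.1) (C p.2) : ℝ) / ((C p.2).ncard : ℝ))

/-- Lower bound on a single ratio, from `star`. -/
lemma ratio_lb {c : ℝ} (hG : NoBigAnticomp G c) {X Y : Set V} (hd : Disjoint X Y)
    (hn : 1 ≤ Fintype.card V)
    (hx : 2*((⌈(Fintype.card V : ℝ) ^ ((1:ℝ) - c)⌉₊ : ℝ)) + 2 ≤ (X.ncard : ℝ))
    (hy : 2*((⌈(Fintype.card V : ℝ) ^ ((1:ℝ) - c)⌉₊ : ℝ)) + 2 ≤ (Y.ncard : ℝ)) :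
    1/(2*((⌈(Fintype.card V : ℝ) ^ ((1:ℝ) - c)⌉₊ : ℝ)))
      ≤ (maxDegFrom G X Y : ℝ) / (Y.ncard : ℝ) := by
  set n : ℝ := (Fintype.card V : ℝ) with hnn
  have hn0 : (0:ℝ) < n := by
    rw [hnn]; exact_mod_cast Nat.lt_of_lt_of_le Nat.zero_lt_one hn
  set s : ℕ := ⌈n ^ ((1:ℝ) - c)⌉₊ with hss
  have hs1 : 1 ≤ s := Nat.one_le_ceil_iff.mpr (Real.rpow_pos_of_pos hn0 _)
  have hsR : (1:ℝ) ≤ (s:ℝ) := by exact_mod_cast hs1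
  have hXs : s ≤ X.ncard := by
    have : (s:ℝ) ≤ (X.ncard:ℝ) := by linarith
    exact_mod_cast this
  have hstar := star G hG hd hXs
  have hceil : n ^ ((1:ℝ) - c) ≤ (s:ℝ) := Nat.le_ceil _
  have hY0 : (0:ℝ) < (Y.ncard:ℝ) := by linarith
  set d : ℝ := (maxDegFrom G X Y : ℝ) with hdd
  have hkey : (Y.ncard:ℝ) < (s:ℝ)*d + (s:ℝ) := lt_of_lt_of_le hstar (by
    apply add_le_add_right hceil)
  rw [div_le_div_iff₀ (by linarith) hY0]
  nlinarith

/-- The main descent/extraction lemma. -/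
lemma descent_aux {c : ℝ} (hG : NoBigAnticomp G c) (hn : 1 ≤ Fintype.card V)
    (I₀ : Finset ℤ) (B : ℤ → Set V)
    (hdis : ∀ i ∈ I₀, ∀ j ∈ I₀, i ≠ j → Disjoint (B i) (B j))
    {α ψ : ℝ} (hα0 : 0 < α) (hα1 : α ≤ 1) (hψ0 : 0 < ψ)
    (hstep : (1:ℝ) ≤ (Fintype.card V : ℝ)^(ψ/2) * α ^ (I₀.offDiag.card + 1)) :
    ∀ t : ℕ, ∀ C : ℤ → Set V, (∀ i ∈ I₀, C i ⊆ B i) →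
    (∀ i ∈ I₀, 2*((⌈(Fintype.card V : ℝ) ^ ((1:ℝ) - c)⌉₊ : ℝ)) + 2
        ≤ α^t * ((C i).ncard : ℝ)) →
    (Phi G I₀ C ≤ (1/(4*(⌈(Fintype.card V : ℝ) ^ ((1:ℝ) - c)⌉₊ : ℝ)))^(I₀.offDiag.card)
        * ((Fintype.card V : ℝ)^(ψ/2))^t) →
    ∃ C' : ℤ → Set V, (∀ i ∈ I₀, C' i ⊆ C i ∧ α^t * ((C i).ncard : ℝ) ≤ ((C' i).ncard : ℝ))
      ∧ Res G I₀ C' α ψ := by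
  classical
  set n : ℝ := (Fintype.card V : ℝ) with hnn
  have hn0 : (0:ℝ) < n := by
    rw [hnn]; exact_mod_cast Nat.lt_of_lt_of_le Nat.zero_lt_one hn
  have hn1 : (1:ℝ) ≤ n := by rw [hnn]; exact_mod_cast hn
  set s : ℕ := ⌈n ^ ((1:ℝ) - c)⌉₊ with hss
  have hs1 : 1 ≤ s := Nat.one_le_ceil_iff.mpr (Real.rpow_pos_of_pos hn0 _)
  have hsR : (1:ℝ) ≤ (s:ℝ) := by exact_mod_cast hs1
  set M : ℕ := I₀.offDiag.card with hMM
  intro t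
  induction t with
  | zero =>
    intro C hsub hsize hpot
    rcases Finset.eq_empty_or_nonempty I₀.offDiag with hOD | hOD
    · refine ⟨C, fun i hi => ⟨subset_rfl, by simp⟩, ?_⟩
      intro h hh j hj hne X hX Y hY hXc hYc
      exact absurd (Finset.mem_offDiag.mpr ⟨hh, hj, hne⟩ : (h, j) ∈ I₀.offDiag)
        (by rw [hOD]; exact Finset.notMem_empty _)
    · exfalso
      have hM1 : 1 ≤ M := by
        rw [hMM]; exact Finset.card_pos.mpr hOD
      have hlb : (1/(2*(s:ℝ)))^M ≤ Phi G I₀ C := by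
        rw [hMM, ← Finset.prod_const]
        apply Finset.prod_le_prod
        · intro p hp; positivity
        · intro p hp
          rcases Finset.mem_offDiag.mp hp with ⟨hp1, hp2, hpne⟩
          have hd : Disjoint (C p.1) (C p.2) :=
            (hdis p.1 hp1 p.2 hp2 hpne).mono (hsub p.1 hp1) (hsub p.2 hp2)
          have h1 := hsize p.1 hp1
          have h2 := hsize p.2 hp2
          rw [pow_zero, one_mul] at h1 h2
          exact ratio_lb G hG hd hn h1 h2
      rw [pow_zero, mul_one] at hpot
      have hcontr : (1/(4*(s:ℝ)))^M < (1/(2*(s:ℝ)))^M := by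
        apply pow_lt_pow_left₀ _ (by positivity) (by omega)
        rw [div_lt_div_iff₀ (by linarith) (by linarith)]
        nlinarith
      linarith
  | succ t ih =>
    intro C hsub hsize hpot
    by_cases hres : Res G I₀ C α ψ
    · refine ⟨C, fun i hi => ⟨subset_rfl, ?_⟩, hres⟩
      have : α^(t+1) ≤ 1 := pow_le_one₀ (le_of_lt hα0) hα1
      have hC0 : (0:ℝ) ≤ ((C i).ncard : ℝ) := by positivity
      nlinarith
    · -- extract a violating pair
      rw [Res] at hres
      push_neg at hres
      obtain ⟨h, hh, j, hj, hne, X, hXsub, Y, hYsub, hXc, hYc, hle⟩ := hres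
      set C₂ : ℤ → Set V := fun i => if i = h then X else if i = j then Y else C i with hC₂
      have hC₂h : C₂ h = X := by simp [hC₂]
      have hC₂j : C₂ j = Y := by simp [hC₂, hne.symm]
      have hC₂sub : ∀ i ∈ I₀, C₂ i ⊆ C i := by
        intro i hi
        by_cases h1 : i = h
        · subst h1; rw [hC₂h]; exact hXsub
        · by_cases h2 : i = j
          · subst h2; rw [hC₂j]; exact hYsub
          · simp [hC₂, h1, h2]
      have hC₂size : ∀ i ∈ I₀, α * ((C i).ncard : ℝ) ≤ ((C₂ i).ncard : ℝ) := by
        intro i hi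
        by_cases h1 : i = h
        · subst h1; rw [hC₂h]; exact hXc
        · by_cases h2 : i = j
          · subst h2; rw [hC₂j]; exact hYc
          · simp only [hC₂, if_neg h1, if_neg h2]
            nlinarith [(Nat.cast_nonneg (C i).ncard : (0:ℝ) ≤ ((C i).ncard:ℝ))]
      have hCpos : ∀ i ∈ I₀, (0:ℝ) < ((C i).ncard : ℝ) := by
        intro i hi
        have h1 := hsize i hi
        have h2 : α^(t+1) ≤ 1 := pow_le_one₀ (le_of_lt hα0) hα1
        nlinarith [(Nat.cast_nonneg (C i).ncard : (0:ℝ) ≤ ((C i).ncard:ℝ))]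
      -- factorwise bound on the potential
      have hfact : ∀ p ∈ I₀.offDiag,
          ((maxDegFrom G (C₂ p.1) (C₂ p.2) : ℝ) / ((C₂ p.2).ncard : ℝ))
          ≤ (if p = (h, j) then n^(-ψ) else 1) * α⁻¹ *
            ((maxDegFrom G (C p.1) (C p.2) : ℝ) / ((C p.2).ncard : ℝ)) := by
        intro p hp
        rcases Finset.mem_offDiag.mp hp with ⟨hp1, hp2, hpne⟩
        have hden2 : α * ((C p.2).ncard : ℝ) ≤ ((C₂ p.2).ncard : ℝ) := hC₂size p.2 hp2
        have hdenpos : (0:ℝ) < α * ((C p.2).ncard : ℝ) := by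
          have := hCpos p.2 hp2; positivity
        have hnum : (maxDegFrom G (C₂ p.1) (C₂ p.2) : ℝ)
            ≤ (if p = (h, j) then n^(-ψ) else 1) * (maxDegFrom G (C p.1) (C p.2) : ℝ) := by
          by_cases hpe : p = (h, j)
          · subst hpe
            simp only [if_pos rfl] at *
            rw [hC₂h, hC₂j]
            calc (maxDegFrom G X Y : ℝ) ≤ (maxDegFrom G (C h) (C j) : ℝ) * n^(-ψ) := hle
              _ = n^(-ψ) * (maxDegFrom G (C h) (C j) : ℝ) := by ring
          · simp only [if_neg hpe, one_mul]
            exact_mod_cast maxDegFrom_mono G (hC₂sub p.1 hp1) (hC₂sub p.2 hp2)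
        calc ((maxDegFrom G (C₂ p.1) (C₂ p.2) : ℝ) / ((C₂ p.2).ncard : ℝ))
            ≤ ((if p = (h, j) then n^(-ψ) else 1) * (maxDegFrom G (C p.1) (C p.2) : ℝ))
              / (α * ((C p.2).ncard : ℝ)) := by
              apply div_le_div₀ (by positivity) hnum hdenpos hden2
          _ = (if p = (h, j) then n^(-ψ) else 1) * α⁻¹ *
              ((maxDegFrom G (C p.1) (C p.2) : ℝ) / ((C p.2).ncard : ℝ)) := by
              field_simp
      have hhj : (h, j) ∈ I₀.offDiag := Finset.mem_offDiag.mpr ⟨hh, hj, hne⟩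
      have hM1 : 1 ≤ M := by rw [hMM]; exact Finset.card_pos.mpr ⟨_, hhj⟩
      have hrnonneg : ∀ p ∈ I₀.offDiag.erase (h, j),
          (0:ℝ) ≤ (maxDegFrom G (C₂ p.1) (C₂ p.2) : ℝ) / ((C₂ p.2).ncard : ℝ) := by
        intro p hp; positivity
      have hPhi2 : Phi G I₀ C₂ ≤ n^(-ψ) * α⁻¹^M * Phi G I₀ C := by
        rw [Phi, Phi, ← Finset.mul_prod_erase _ _ hhj, ← Finset.mul_prod_erase _ _ hhj]
        have hb1 : (maxDegFrom G (C₂ (h,j).1) (C₂ (h,j).2) : ℝ) / ((C₂ (h,j).2).ncard : ℝ)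
            ≤ n^(-ψ) * α⁻¹ * ((maxDegFrom G (C (h,j).1) (C (h,j).2) : ℝ) / ((C (h,j).2).ncard : ℝ)) := by
          have := hfact (h,j) hhj
          simpa using this
        have hb2 : ∏ p ∈ I₀.offDiag.erase (h, j),
            ((maxDegFrom G (C₂ p.1) (C₂ p.2) : ℝ) / ((C₂ p.2).ncard : ℝ))
            ≤ ∏ p ∈ I₀.offDiag.erase (h, j),
              (α⁻¹ * ((maxDegFrom G (C p.1) (C p.2) : ℝ) / ((C p.2).ncard : ℝ))) := by
          apply Finset.prod_le_prod hrnonneg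
          intro p hp
          have hpne : p ≠ (h, j) := Finset.ne_of_mem_erase hp
          have := hfact p (Finset.mem_of_mem_erase hp)
          rw [if_neg hpne, one_mul] at this
          exact this
        have hcomb := mul_le_mul hb1 hb2 (Finset.prod_nonneg hrnonneg) (by positivity)
        apply le_trans hcomb
        rw [Finset.prod_mul_distrib, Finset.prod_const, Finset.card_erase_of_mem hhj, ← hMM]
        have hMsub : α⁻¹^(M-1) * α⁻¹ = α⁻¹^M := by
          rw [← pow_succ, Nat.sub_add_cancel hM1]
        apply le_of_eq
        rw [← hMsub]
        ring
      have hainv : α⁻¹^M ≤ n^(ψ/2) := by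
        have h1 : α⁻¹^M * 1 ≤ α⁻¹^M * (n^(ψ/2) * α^(M+1)) := by
          apply mul_le_mul_of_nonneg_left hstep (by positivity)
        have hcanc : α⁻¹^M * α^M = 1 := by
          rw [← mul_pow, inv_mul_cancel₀ (ne_of_gt hα0), one_pow]
        have h2 : α⁻¹^M * (n^(ψ/2) * α^(M+1)) = n^(ψ/2) * α := by
          calc α⁻¹^M * (n^(ψ/2) * α^(M+1)) = n^(ψ/2)*α*(α⁻¹^M * α^M) := by rw [pow_succ]; ring
            _ = n^(ψ/2) * α := by rw [hcanc, mul_one]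
        rw [h2, mul_one] at h1
        exact h1.trans (mul_le_of_le_one_right (Real.rpow_nonneg (le_of_lt hn0) (ψ/2)) hα1)
      have hfac1 : n^(-ψ) * α⁻¹^M * (n^(ψ/2)) ≤ 1 := by
        have h4 : (0:ℝ) ≤ n^(-ψ) * n^(ψ/2) := by positivity
        have h5 : n^(-ψ) * α⁻¹^M * n^(ψ/2) = (n^(-ψ) * n^(ψ/2)) * α⁻¹^M := by ring
        rw [h5]
        calc (n^(-ψ) * n^(ψ/2)) * α⁻¹^M ≤ (n^(-ψ) * n^(ψ/2)) * n^(ψ/2) :=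
              mul_le_mul_of_nonneg_left hainv h4
          _ = 1 := by
              rw [mul_assoc, ← Real.rpow_add hn0, ← Real.rpow_add hn0]
              have : -ψ + (ψ/2 + ψ/2) = 0 := by ring
              rw [this, Real.rpow_zero]
      have hpot2 : Phi G I₀ C₂ ≤ (1/(4*(s:ℝ)))^M * ((n:ℝ)^(ψ/2))^t := by
        have e1 : Phi G I₀ C₂ ≤ n^(-ψ) * α⁻¹^M * ((1/(4*(s:ℝ)))^M * (n^(ψ/2))^(t+1)) := by
          apply le_trans hPhi2
          apply mul_le_mul_of_nonneg_left hpot (by positivity)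
        apply le_trans e1
        have e2 : n^(-ψ) * α⁻¹^M * ((1/(4*(s:ℝ)))^M * (n^(ψ/2))^(t+1))
            = ((1/(4*(s:ℝ)))^M * (n^(ψ/2))^t) * (n^(-ψ) * α⁻¹^M * n^(ψ/2)) := by
          rw [pow_succ]; ring
        rw [e2]
        have e3 : (0:ℝ) ≤ (1/(4*(s:ℝ)))^M * (n^(ψ/2))^t := by positivity
        exact mul_le_of_le_one_right e3 hfac1
      obtain ⟨C', hC'1, hC'2⟩ := ih C₂ (fun i hi => (hC₂sub i hi).trans (hsub i hi))
        (by
          intro i hi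
          have h1 := hsize i hi
          have h2 := hC₂size i hi
          have h3 : (0:ℝ) ≤ α^t := by positivity
          calc 2*(s:ℝ)+2 ≤ α^(t+1) * ((C i).ncard : ℝ) := h1
            _ = α^t * (α * ((C i).ncard : ℝ)) := by rw [pow_succ]; ring
            _ ≤ α^t * ((C₂ i).ncard : ℝ) := mul_le_mul_of_nonneg_left h2 h3)
        hpot2
      refine ⟨C', fun i hi => ⟨(hC'1 i hi).1.trans (hC₂sub i hi), ?_⟩, hC'2⟩
      have h2 := hC₂size i hi
      have h3 : (0:ℝ) ≤ α^t := by positivity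
      calc α^(t+1) * ((C i).ncard : ℝ) = α^t * (α * ((C i).ncard : ℝ)) := by rw [pow_succ]; ring
        _ ≤ α^t * ((C₂ i).ncard : ℝ) := mul_le_mul_of_nonneg_left h2 h3
        _ ≤ ((C' i).ncard : ℝ) := (hC'1 i hi).2
/-- Degree asymmetry bound for a resistant pair. -/
lemma asym (I₀ : Finset ℤ) (C : ℤ → Set V) {α ψ : ℝ} (hn : 1 ≤ Fintype.card V)
    (hres : Res G I₀ C α ψ) (hα0 : 0 < α) (hα2 : α ≤ 1/2)
    {h j : ℤ} (hh : h ∈ I₀) (hj : j ∈ I₀) (hne : h ≠ j)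
    (hCj : (0:ℝ) < ((C j).ncard : ℝ)) :
    (maxDegFrom G (C j) (C h) : ℝ) * ((C j).ncard : ℝ)
      ≤ 2 * (Fintype.card V : ℝ)^ψ * (maxDegFrom G (C h) (C j) : ℝ) * ((C h).ncard : ℝ) := by
  classical
  set n : ℝ := (Fintype.card V : ℝ) with hnn
  set A : Set V := C h with hA
  set Bj : Set V := C j with hB
  set d1 : ℕ := maxDegFrom G A Bj with hd1
  set d2 : ℕ := maxDegFrom G Bj A with hd2
  set deg : V → ℕ := fun v => (G.neighborSet v ∩ A).ncard with hdeg
  have hncoe : ∀ (v : V) (W : Set V),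
      (G.neighborSet v ∩ W).ncard = (W.toFinset.filter (fun u => G.Adj v u)).card := by
    intro v W
    rw [Set.ncard_eq_toFinset_card']
    congr 1
    ext u
    simp [Set.mem_toFinset, and_comm]
  set e : ℕ := ∑ v ∈ Bj.toFinset, deg v with he
  have hEdge : e ≤ A.ncard * d1 := by
    have hdc : e = ∑ u ∈ A.toFinset, (Bj.toFinset.filter (fun v => G.Adj u v)).card := by
      rw [he]
      have e1 : ∀ v, deg v = ∑ u ∈ A.toFinset, (if G.Adj v u then 1 else 0) := by
        intro v
        rw [hdeg]
        simp only [hncoe v A, Finset.card_filter]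
      have e2 : ∀ u, (Bj.toFinset.filter (fun v => G.Adj u v)).card
          = ∑ v ∈ Bj.toFinset, (if G.Adj v u then 1 else 0) := by
        intro u
        rw [Finset.card_filter]
        apply Finset.sum_congr rfl
        intro v _
        rw [G.adj_comm]
      simp only [e1, e2]
      exact Finset.sum_comm
    rw [hdc]
    calc ∑ u ∈ A.toFinset, (Bj.toFinset.filter (fun v => G.Adj u v)).card
        ≤ ∑ _u ∈ A.toFinset, d1 := by
          apply Finset.sum_le_sum
          intro u hu
          rw [← hncoe u Bj]
          exact le_maxDegFrom G (by rwa [Set.mem_toFinset] at hu)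
      _ = A.ncard * d1 := by rw [Finset.sum_const, smul_eq_mul, Set.ncard_eq_toFinset_card']
  by_cases hd20 : d2 = 0
  · rw [hd20]
    rw [Nat.cast_zero, zero_mul]
    have h1 : (0:ℝ) ≤ n^ψ := Real.rpow_nonneg (by positivity) _
    positivity
  · -- d2 > 0 hence e > 0
    have he0 : 0 < e := by
      rcases Nat.eq_zero_or_pos e with he0 | hepos
      · exfalso
        apply hd20
        have hz : ∀ v ∈ Bj.toFinset, deg v = 0 := Finset.sum_eq_zero_iff.mp he0
        rcases Bj.eq_empty_or_nonempty with hBe | hBne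
        · rw [hd2, hB] at *
          rw [hBe]
          simp [maxDegFrom]
        · obtain ⟨v₀, hv₀, hveq⟩ := maxDegFrom_exists G A hBne
          rw [hd2, hveq]
          exact hz v₀ (Set.mem_toFinset.mpr hv₀)
      · exact hepos
    set Yf : Finset V := Bj.toFinset.filter (fun v => ((deg v : ℝ)) * ((Bj.ncard:ℝ)) ≤ 2*(e:ℝ)) with hYf
    set bad : Finset V := Bj.toFinset.filter (fun v => ¬(((deg v : ℝ)) * ((Bj.ncard:ℝ)) ≤ 2*(e:ℝ))) with hbad
    have hsplit : Yf.card + bad.card = Bj.toFinset.card :=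
      Finset.card_filter_add_card_filter_not _
    have hbadbound : (bad.card : ℝ) * (2*(e:ℝ)) ≤ (e:ℝ) * ((Bj.ncard:ℝ)) := by
      have h1 : (bad.card:ℝ) * (2*(e:ℝ)) = ∑ _v ∈ bad, (2*(e:ℝ)) := by
        rw [Finset.sum_const, nsmul_eq_mul]
      rw [h1]
      have h2 : ∑ _v ∈ bad, (2*(e:ℝ)) ≤ ∑ v ∈ bad, (deg v:ℝ)*((Bj.ncard:ℝ)) := by
        apply Finset.sum_le_sum
        intro v hv
        have := (Finset.mem_filter.mp hv).2
        exact le_of_lt (not_le.mp this)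
      apply le_trans h2
      rw [← Finset.sum_mul]
      apply mul_le_mul_of_nonneg_right _ (le_of_lt hCj)
      have h3 : ∑ v ∈ bad, deg v ≤ e := by
        rw [he]
        exact Finset.sum_le_sum_of_subset (Finset.filter_subset _ _)
      calc ∑ v ∈ bad, (deg v:ℝ) = ((∑ v ∈ bad, deg v : ℕ) : ℝ) := by push_cast; rfl
        _ ≤ (e:ℝ) := by exact_mod_cast h3
    have heR : (0:ℝ) < (e:ℝ) := by exact_mod_cast he0
    have hbadcard : 2*(bad.card:ℝ) ≤ ((Bj.ncard:ℝ)) := by nlinarith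
    have hBjfc : Bj.toFinset.card = Bj.ncard := (Set.ncard_eq_toFinset_card' _).symm
    have hYcard : ((Bj.ncard:ℝ))/2 ≤ (Yf.card:ℝ) := by
      have h4 : (Yf.card:ℝ) + (bad.card:ℝ) = ((Bj.ncard:ℝ)) := by
        rw [← hBjfc]; exact_mod_cast hsplit
      linarith
    set Y' : Set V := ↑Yf with hY'
    have hY'sub : Y' ⊆ Bj := by
      intro v hv
      have := Finset.mem_filter.mp hv
      exact Set.mem_toFinset.mp this.1
    have hY'nc : (Y'.ncard : ℝ) = (Yf.card : ℝ) := by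
      rw [hY', Set.ncard_coe_finset]
    have hY'card : α * ((C j).ncard:ℝ) ≤ (Y'.ncard:ℝ) := by
      rw [hY'nc]
      have : α * ((C j).ncard:ℝ) ≤ ((C j).ncard:ℝ)/2 := by
        rw [← hB] at *
        nlinarith
      rw [← hB]
      linarith
    have hAcard : α * ((C h).ncard:ℝ) ≤ ((C h).ncard:ℝ) := by
      have h0 : (0:ℝ) ≤ ((C h).ncard:ℝ) := by positivity
      nlinarith
    have hres2 := hres j hj h hh (Ne.symm hne) Y' hY'sub (C h) subset_rfl hY'card hAcard
    have hY'ne : Y'.Nonempty := by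
      apply Set.nonempty_of_ncard_ne_zero
      intro hzero
      rw [hzero] at hY'nc
      rw [← hB] at *
      simp only [Nat.cast_zero] at hY'nc
      linarith
    obtain ⟨v₀, hv₀, hveq⟩ := maxDegFrom_exists G A hY'ne
    have hv₀deg : (maxDegFrom G Y' A : ℝ) * ((Bj.ncard:ℝ)) ≤ 2*(e:ℝ) := by
      rw [hveq]
      have hm := Finset.mem_filter.mp hv₀
      exact hm.2
    have hCjpos : (0:ℝ) < ((Bj.ncard:ℝ)) := hCj
    have hchain : (d2:ℝ) * n^(-ψ) * ((Bj.ncard:ℝ)) < 2*(e:ℝ) := by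
      have := mul_lt_mul_of_pos_right hres2 hCjpos
      calc (d2:ℝ) * n^(-ψ) * ((Bj.ncard:ℝ))
          < (maxDegFrom G Y' (C h) : ℝ) * ((Bj.ncard:ℝ)) := this
        _ = (maxDegFrom G Y' A : ℝ) * ((Bj.ncard:ℝ)) := by rw [← hA]
        _ ≤ 2*(e:ℝ) := hv₀deg
    have hEdgeR : 2*(e:ℝ) ≤ 2 * ((A.ncard:ℝ) * (d1:ℝ)) := by
      have : (e:ℝ) ≤ (A.ncard:ℝ) * (d1:ℝ) := by exact_mod_cast hEdge
      linarith
    have hfin : (d2:ℝ) * n^(-ψ) * ((Bj.ncard:ℝ)) ≤ 2 * ((A.ncard:ℝ) * (d1:ℝ)) :=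
      le_of_lt (lt_of_lt_of_le hchain hEdgeR)
    have hn0 : (0:ℝ) < n := by
      rw [hnn]; exact_mod_cast Nat.lt_of_lt_of_le Nat.zero_lt_one hn
    have hnψ : n^(-ψ) * n^ψ = 1 := by
      rw [← Real.rpow_add hn0]
      simp
    have hψnn : (0:ℝ) ≤ n^ψ := Real.rpow_nonneg (le_of_lt hn0) _
    calc (d2:ℝ) * ((Bj.ncard:ℝ)) = ((d2:ℝ) * n^(-ψ) * ((Bj.ncard:ℝ))) * n^ψ := by
          have h8 : (d2:ℝ) * n^(-ψ) * ((Bj.ncard:ℝ)) * n^ψ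
              = (d2:ℝ) * ((Bj.ncard:ℝ)) * (n^(-ψ) * n^ψ) := by ring
          rw [h8, hnψ, mul_one]
      _ ≤ (2 * ((A.ncard:ℝ) * (d1:ℝ))) * n^ψ := mul_le_mul_of_nonneg_right hfin hψnn
      _ = 2 * n^ψ * (d1:ℝ) * ((A.ncard:ℝ)) := by ring

lemma seqRamsey (r : ℕ) (hr : 0 < r) (cfun : ℤ → ℤ → ℕ) :
    ∀ (m : ℕ) (A : Finset ℤ), (∀ a ∈ A, ∀ b ∈ A, cfun a b < r) → (r+1)^m ≤ A.card →
    ∃ S ⊆ A, S.card = m ∧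
      ∀ a ∈ S, ∀ b ∈ S, ∀ b' ∈ S, a < b → a < b' → cfun a b = cfun a b' := by
  intro m
  induction m with
  | zero =>
    intro A _ _
    exact ⟨∅, Finset.empty_subset _, Finset.card_empty, by simp⟩
  | succ m ih =>
    intro A hcol hA
    have hpow1 : 1 ≤ (r+1)^(m+1) := Nat.one_le_pow _ _ (by omega)
    have hAne : A.Nonempty := Finset.card_pos.mp (by omega)
    set x := A.min' hAne with hx
    have hxA : x ∈ A := A.min'_mem hAne
    set A' := A.erase x with hA'
    have hA'card : r * (r+1)^m ≤ A'.card := by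
      have h1 : (r+1)^(m+1) = r*(r+1)^m + (r+1)^m := by ring
      have h2 : 1 ≤ (r+1)^m := Nat.one_le_pow _ _ (by omega)
      have h3 : A'.card = A.card - 1 := Finset.card_erase_of_mem hxA
      omega
    have hmaps : ∀ b ∈ A', cfun x b ∈ Finset.range r := by
      intro b hb
      exact Finset.mem_range.mpr (hcol x hxA b (Finset.erase_subset _ _ hb))
    obtain ⟨t, _, hfib⟩ := Finset.exists_le_card_fiber_of_mul_le_card_of_maps_to hmaps
      ⟨0, Finset.mem_range.mpr hr⟩ (by rwa [Finset.card_range])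
    set F := A'.filter (fun b => cfun x b = t) with hF
    obtain ⟨S', hS'F, hS'card, hS'prop⟩ := ih F
      (fun a ha b hb => hcol a (Finset.erase_subset _ _ (Finset.filter_subset _ _ ha))
        b (Finset.erase_subset _ _ (Finset.filter_subset _ _ hb))) hfib
    have hxS' : x ∉ S' := by
      intro hmem
      exact Finset.notMem_erase x A (Finset.filter_subset _ _ (hS'F hmem))
    refine ⟨insert x S', ?_, ?_, ?_⟩
    · intro a ha
      rcases Finset.mem_insert.mp ha with rfl | ha'
      · exact hxA
      · exact Finset.erase_subset _ _ (Finset.filter_subset _ _ (hS'F ha'))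
    · rw [Finset.card_insert_of_notMem hxS', hS'card]
    · intro a ha b hb b' hb' hab hab'
      have hSsubA : ∀ u, u ∈ S' → u ∈ A := fun u hu =>
        Finset.erase_subset _ _ (Finset.filter_subset _ _ (hS'F hu))
      rcases Finset.mem_insert.mp ha with rfl | haS
      · -- a = x
        have hb2 : b ∈ S' := by
          rcases Finset.mem_insert.mp hb with rfl | h; · omega
          · exact h
        have hb'2 : b' ∈ S' := by
          rcases Finset.mem_insert.mp hb' with rfl | h; · omega
          · exact h
        have e1 : cfun x b = t := (Finset.mem_filter.mp (hS'F hb2)).2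
        have e2 : cfun x b' = t := (Finset.mem_filter.mp (hS'F hb'2)).2
        rw [e1, e2]
      · have hxa : x ≤ a := A.min'_le a (hSsubA a haS)
        have hb2 : b ∈ S' := by
          rcases Finset.mem_insert.mp hb with rfl | h; · omega
          · exact h
        have hb'2 : b' ∈ S' := by
          rcases Finset.mem_insert.mp hb' with rfl | h; · omega
          · exact h
        exact hS'prop a haS b hb2 b' hb'2 hab hab'

lemma monoRamsey (r k : ℕ) (hr : 0 < r) (hk : 2 ≤ k) (cfun : ℤ → ℤ → ℕ)
    (hsym : ∀ a b, cfun a b = cfun b a) (A : Finset ℤ)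
    (hcol : ∀ a ∈ A, ∀ b ∈ A, cfun a b < r) (hA : (r+1)^(r*(k-1)+1) ≤ A.card) :
    ∃ S ⊆ A, S.card = k ∧ ∃ t, ∀ a ∈ S, ∀ b ∈ S, a ≠ b → cfun a b = t := by
  obtain ⟨S, hSA, hScard, hprop⟩ := seqRamsey r hr cfun (r*(k-1)+1) A hcol hA
  have hSne : S.Nonempty := Finset.card_pos.mp (by omega)
  set z := S.max' hSne with hz
  have hzS : z ∈ S := S.max'_mem hSne
  set S' := S.erase z with hS'
  have hS'card : S'.card = r*(k-1) := by
    rw [hS', Finset.card_erase_of_mem hzS, hScard]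
    omega
  have hmaps : ∀ a ∈ S', cfun a z ∈ Finset.range r := by
    intro a ha
    exact Finset.mem_range.mpr (hcol a (hSA (Finset.erase_subset _ _ ha)) z (hSA hzS))
  obtain ⟨t, _, hfib⟩ := Finset.exists_le_card_fiber_of_mul_le_card_of_maps_to hmaps
    ⟨0, Finset.mem_range.mpr hr⟩ (by rw [Finset.card_range, hS'card])
  set F := S'.filter (fun a => cfun a z = t) with hF
  obtain ⟨F', hF'F, hF'card⟩ := Finset.exists_subset_card_eq hfib
  have hzF' : z ∉ F' := fun hmem =>
    Finset.notMem_erase z S (Finset.filter_subset _ _ (hF'F hmem))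
  have hF'S : ∀ u ∈ F', u ∈ S := fun u hu =>
    Finset.erase_subset _ _ (Finset.filter_subset _ _ (hF'F hu))
  have hF'lt : ∀ u ∈ F', u < z := by
    intro u hu
    have h1 : u ≤ z := S.le_max' u (hF'S u hu)
    have h2 : u ≠ z := fun he => hzF' (he ▸ hu)
    omega
  have hF'col : ∀ u ∈ F', cfun u z = t := fun u hu =>
    (Finset.mem_filter.mp (hF'F hu)).2
  refine ⟨insert z F', ?_, ?_, t, ?_⟩
  · intro a ha
    rcases Finset.mem_insert.mp ha with rfl | h
    · exact hSA hzS
    · exact hSA (hF'S a h)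
  · rw [Finset.card_insert_of_notMem hzF', hF'card]; omega
  · intro a ha b hb hab
    rcases Finset.mem_insert.mp ha with rfl | haF
    · rcases Finset.mem_insert.mp hb with rfl | hbF
      · omega
      · rw [hsym]; exact hF'col b hbF
    · rcases Finset.mem_insert.mp hb with rfl | hbF
      · exact hF'col a haF
      · rcases lt_trichotomy a b with hlt | heq | hgt
        · calc cfun a b = cfun a z := hprop a (hF'S a haF) b (hF'S b hbF) z hzS hlt
                (hF'lt a haF)
            _ = t := hF'col a haF
        · omega
        · calc cfun a b = cfun b a := hsym a b
            _ = cfun b z := hprop b (hF'S b hbF) a (hF'S a haF) z hzS hgt (hF'lt b hbF)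
            _ = t := hF'col b hbF

/-- Helper: eventually `C ≤ n^δ`. -/
lemma exists_N (Cc : ℝ) {δ : ℝ} (hδ : 0 < δ) :
    ∃ N : ℕ, 1 ≤ N ∧ ∀ n : ℕ, N ≤ n → Cc ≤ (n:ℝ)^δ := by
  refine ⟨max 1 ⌈(max Cc 1) ^ (1/δ)⌉₊, le_max_left _ _, ?_⟩
  intro n hn
  have hM1 : (1:ℝ) ≤ max Cc 1 := le_max_right _ _
  have hM0 : (0:ℝ) ≤ max Cc 1 := by linarith
  have h1 : (max Cc 1)^(1/δ) ≤ (n:ℝ) := by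
    calc (max Cc 1)^(1/δ) ≤ (⌈(max Cc 1) ^ (1/δ)⌉₊ : ℝ) := Nat.le_ceil _
      _ ≤ (n:ℝ) := by
          have := le_trans (le_max_right 1 ⌈(max Cc 1) ^ (1/δ)⌉₊) hn
          exact_mod_cast this
  calc Cc ≤ max Cc 1 := le_max_left _ _
    _ = ((max Cc 1)^(1/δ))^δ := by
        rw [← Real.rpow_mul hM0, one_div, inv_mul_cancel₀ (ne_of_gt hδ), Real.rpow_one]
    _ ≤ (n:ℝ)^δ := Real.rpow_le_rpow (Real.rpow_nonneg hM0 _) h1 (le_of_lt hδ)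

/-- Scale class of `x` w.r.t. base `β`, capped at `S`. -/
noncomputable def cl (β : ℝ) (S : ℕ) (x : ℝ) : ℕ :=
  min (sInf {j : ℕ | 1 < β^(j+1) * x}) S

lemma cl_le (β : ℝ) (S : ℕ) (x : ℝ) : cl β S x ≤ S := min_le_right _ _

lemma cl_spec {β : ℝ} {S : ℕ} {x : ℝ} (hβ : 1 ≤ β) (hx1 : x ≤ 1)
    (hlow : 1 < β^(S+1) * x) :
    β^(cl β S x) * x ≤ 1 ∧ 1 < β^(cl β S x + 1) * x := by
  have hSet : S ∈ {j : ℕ | 1 < β^(j+1) * x} := hlow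
  have hInfle : sInf {j : ℕ | 1 < β^(j+1) * x} ≤ S := Nat.sInf_le hSet
  have hcl : cl β S x = sInf {j : ℕ | 1 < β^(j+1) * x} := min_eq_left hInfle
  have hmem : 1 < β^(cl β S x + 1) * x := by
    rw [hcl]
    exact Nat.sInf_mem ⟨S, hSet⟩
  constructor
  · rcases Nat.eq_zero_or_pos (cl β S x) with h0 | hpos
    · rw [h0, pow_zero, one_mul]; exact hx1
    · have hnot : (cl β S x - 1) ∉ {j : ℕ | 1 < β^(j+1) * x} :=
        Nat.notMem_of_lt_sInf (by rw [← hcl]; omega)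
      have : ¬ (1 < β^((cl β S x - 1)+1) * x) := hnot
      have he : (cl β S x - 1) + 1 = cl β S x := by omega
      rw [he] at this
      linarith [not_lt.mp this]
  · exact hmem

lemma cl_compare {β : ℝ} {S : ℕ} {x y : ℝ} (hβ : 1 ≤ β) (hx1 : x ≤ 1) (hy1 : y ≤ 1)
    (hlx : 1 < β^(S+1) * x) (hly : 1 < β^(S+1) * y) (heq : cl β S x = cl β S y) :
    x ≤ β * y := by
  obtain ⟨hx_up, _⟩ := cl_spec hβ hx1 hlx
  obtain ⟨_, hy_lo⟩ := cl_spec hβ hy1 hly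
  rw [← heq] at hy_lo
  have hpow : (0:ℝ) < β^(cl β S x) := pow_pos (by linarith) _
  have h1 : β^(cl β S x) * x ≤ 1 := hx_up
  have h2 : 1 < β^(cl β S x) * (β * y) := by
    rw [pow_succ] at hy_lo
    calc (1:ℝ) < β^(cl β S x) * β * y := hy_lo
      _ = β^(cl β S x) * (β * y) := by ring
  have := lt_of_le_of_lt h1 h2
  exact le_of_lt ((mul_lt_mul_iff_right₀ hpow).mp this)


end Stmt8

set_option maxHeartbeats 1600000 in
/-- For every integer `k ≥ 0` and `0 < c, φ, μ, σ, Σ, Λ ≤ 1` with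
`σ < Σ < c`, there exist `λ > 0` and integers `N` and `K ≥ 2` such that: for every
graph `G` with `|G| ≥ N` and no disjoint anticomplete pair of sets of size
`|G|^(1-c)`, and every blockade of length at least `K` in `G` with shrinkage at most
`σ` and linkage at most `λ`, there exist `I' ⊆ I` with `|I'| = k` and subsets
`B' i ⊆ B i` such that `(B' i : i ∈ I')` has shrinkage at most `Σ` and a
`(φ,μ)`-band which is at most `Λ`. -/
theorem stmt_8 (k : ℕ) (c phi mu sig Sig Lam : ℝ)
    (hc0 : 0 < c) (hc1 : c ≤ 1) (hphi0 : 0 < phi) (hphi1 : phi ≤ 1)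
    (hmu0 : 0 < mu) (hmu1 : mu ≤ 1) (hsig0 : 0 < sig) (hsig1 : sig ≤ 1)
    (hSig0 : 0 < Sig) (hSig1 : Sig ≤ 1) (hLam0 : 0 < Lam) (hLam1 : Lam ≤ 1)
    (h1 : sig < Sig) (h2 : Sig < c) :
    ∃ lam : ℝ, 0 < lam ∧ ∃ N K : ℕ, 2 ≤ K ∧
      ∀ (V : Type) [Fintype V] (G : SimpleGraph V),
        N ≤ Fintype.card V → NoBigAnticomp G c →
        ∀ (I : Finset ℤ) (B : ℤ → Set V),
          IsBlockade I B → K ≤ I.card → ShrinkageLE I B sig → LinkageLE G I B lam →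
          ∃ I' ⊆ I, I'.card = k ∧ ∃ B' : ℤ → Set V,
            (∀ i ∈ I', B' i ⊆ B i ∧ (B' i).Nonempty) ∧
            ShrinkageLE I' B' Sig ∧
            ∃ tau : ℝ, 0 < tau ∧ tau ≤ Lam ∧ IsBand G I' B' tau phi mu := by
  classical
  set ψ : ℝ := phi/8 with hψdef
  have hψ0 : 0 < ψ := by positivity
  set α : ℝ := min mu (1/2) with hαdef
  have hα0 : 0 < α := lt_min hmu0 (by norm_num)
  have hα1 : α ≤ 1 := le_trans (min_le_right _ _) (by norm_num)
  have hα2 : α ≤ 1/2 := min_le_right _ _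
  have hαμ : α ≤ mu := min_le_left _ _
  set Scl : ℕ := ⌈2/ψ⌉₊ + 1 with hScldef
  set r : ℕ := Scl + 1 with hrdef
  set K : ℕ := max ((r+1)^(r*(k-1)+1)) 2 with hKdef
  set M : ℕ := K*K - K with hMdef
  set T : ℕ := ⌈(8*(M:ℝ))/ψ⌉₊ + 1 with hTdef
  obtain ⟨N₂, hN₂1, hN₂⟩ := Stmt8.exists_N (6*(α⁻¹)^T) (show (0:ℝ) < c - sig by linarith)
  obtain ⟨N₄, hN₄1, hN₄⟩ := Stmt8.exists_N ((α⁻¹)^(M+1)) (show (0:ℝ) < ψ/2 by positivity)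
  obtain ⟨N₅, hN₅1, hN₅⟩ := Stmt8.exists_N ((α⁻¹)^T) (show (0:ℝ) < Sig - sig by linarith)
  obtain ⟨N₆, hN₆1, hN₆⟩ := Stmt8.exists_N 4 (show (0:ℝ) < phi/2 by positivity)
  refine ⟨Lam * α^T, by positivity, 9 + N₂ + N₄ + N₅ + N₆, K, le_max_right _ _, ?_⟩
  intro V _ G hNcard hNoBig I B hBlock hKI hShr hLink
  set n : ℝ := (Fintype.card V : ℝ) with hndef
  have h9 : 9 ≤ Fintype.card V := by omega
  have hcard1 : 1 ≤ Fintype.card V := by omega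
  have hn1 : (1:ℝ) ≤ n := by rw [hndef]; exact_mod_cast hcard1
  have hn0 : (0:ℝ) < n := by linarith
  have hn9 : (9:ℝ) ≤ n := by rw [hndef]; exact_mod_cast h9
  have hC2' : 6*(α⁻¹)^T ≤ n^(c-sig) := hN₂ _ (by omega)
  have hC4' : (α⁻¹)^(M+1) ≤ n^(ψ/2) := hN₄ _ (by omega)
  have hC5' : (α⁻¹)^T ≤ n^(Sig-sig) := hN₅ _ (by omega)
  have hC6' : (4:ℝ) ≤ n^(phi/2) := hN₆ _ (by omega)
  have hwidth : ∀ i ∈ I, n^((1:ℝ)-sig) ≤ ((B i).ncard : ℝ) := hShr.1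
  rcases le_or_gt k 1 with hk1 | hk2
  · -- trivial branch : k ≤ 1
    have hkI : k ≤ I.card := by
      have h2K : 2 ≤ K := le_max_right _ _
      omega
    obtain ⟨I', hI'sub, hI'card⟩ := Finset.exists_subset_card_eq hkI
    refine ⟨I', hI'sub, hI'card, B, fun i hi => ⟨subset_rfl, hBlock.1 i (hI'sub hi)⟩,
      ⟨?_, ?_⟩, Lam, hLam0, le_refl _, ?_⟩
    · intro i hi
      calc n^((1:ℝ)-Sig) ≤ n^((1:ℝ)-sig) :=
            Real.rpow_le_rpow_of_exponent_le hn1 (by linarith)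
        _ ≤ ((B i).ncard : ℝ) := hwidth i (hI'sub hi)
    · calc n^((1:ℝ)-Sig) ≤ n^((1:ℝ)) := Real.rpow_le_rpow_of_exponent_le hn1 (by linarith)
        _ = n := Real.rpow_one n
    · intro h hh j hj hne
      exact absurd (Finset.card_le_one.mp (by omega) h hh j hj) hne
  · -- main branch : k ≥ 2
    obtain ⟨I₀, hI₀sub, hI₀card⟩ := Finset.exists_subset_card_eq hKI
    have hMeq : I₀.offDiag.card = M := by rw [Finset.offDiag_card, hI₀card]
    set s : ℕ := ⌈n ^ ((1:ℝ) - c)⌉₊ with hsdef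
    have hs1 : 1 ≤ s := Nat.one_le_ceil_iff.mpr (Real.rpow_pos_of_pos hn0 _)
    have hsR1 : (1:ℝ) ≤ (s:ℝ) := by exact_mod_cast hs1
    have hrp1c : (1:ℝ) ≤ n^((1:ℝ)-c) := by
      have h0 := Real.rpow_le_rpow_of_exponent_le hn1 (show (0:ℝ) ≤ (1:ℝ)-c by linarith)
      rwa [Real.rpow_zero] at h0
    have hsceil : (s:ℝ) ≤ n^((1:ℝ)-c) + 1 :=
      le_of_lt (Nat.ceil_lt_add_one (Real.rpow_nonneg (le_of_lt hn0) _))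
    have hsn : (s:ℝ) ≤ n := by
      have h1 : n^((1:ℝ)-c) ≤ n := by
        calc n^((1:ℝ)-c) ≤ n^((1:ℝ)) := Real.rpow_le_rpow_of_exponent_le hn1 (by linarith)
          _ = n := Real.rpow_one n
      have h2 : s ≤ Fintype.card V := by
        rw [hsdef]
        apply Nat.ceil_le.mpr
        rw [← hndef] at *
        exact h1
      calc (s:ℝ) ≤ ((Fintype.card V : ℕ):ℝ) := by exact_mod_cast h2
        _ = n := by rw [hndef]
    have hcanc : α^T * (α⁻¹)^T = 1 := by
      rw [← mul_pow, mul_inv_cancel₀ (ne_of_gt hα0), one_pow]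
    have hdisB : ∀ i ∈ I₀, ∀ j ∈ I₀, i ≠ j → Disjoint (B i) (B j) :=
      fun i hi j hj hne => hBlock.2 i (hI₀sub hi) j (hI₀sub hj) hne
    -- top size hypothesis
    have hsize_top : ∀ i ∈ I₀, 2*(s:ℝ)+2 ≤ α^T * ((B i).ncard : ℝ) := by
      intro i hi
      have hw : n^((1:ℝ)-sig) ≤ ((B i).ncard : ℝ) := hwidth i (hI₀sub hi)
      have e1 : 2*(s:ℝ)+2 ≤ 6*n^((1:ℝ)-c) := by linarith
      have e4 : (6:ℝ) ≤ α^T * n^(c-sig) := by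
        have h5 := mul_le_mul_of_nonneg_left hC2' (pow_nonneg (le_of_lt hα0) T)
        calc (6:ℝ) = α^T * (6*(α⁻¹)^T) := by
              rw [show α^T * (6*(α⁻¹)^T) = 6*(α^T*(α⁻¹)^T) from by ring, hcanc, mul_one]
          _ ≤ α^T * n^(c-sig) := h5
      have e3 : n^((1:ℝ)-sig) = n^((1:ℝ)-c) * n^(c-sig) := by
        rw [← Real.rpow_add hn0]; ring_nf
      have e2 : 6*n^((1:ℝ)-c) ≤ α^T * n^((1:ℝ)-sig) := by
        rw [e3]
        have h6 := mul_le_mul_of_nonneg_right e4 (Real.rpow_nonneg (le_of_lt hn0) ((1:ℝ)-c))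
        calc 6*n^((1:ℝ)-c) ≤ α^T * n^(c-sig) * n^((1:ℝ)-c) := h6
          _ = α^T * (n^((1:ℝ)-c) * n^(c-sig)) := by ring
      have h7 := mul_le_mul_of_nonneg_left hw (pow_nonneg (le_of_lt hα0) T)
      linarith
    -- top potential hypothesis
    have hBpos : ∀ i ∈ I₀, (0:ℝ) < ((B i).ncard : ℝ) := by
      intro i hi
      have := hwidth i (hI₀sub hi)
      have h0 : (0:ℝ) < n^((1:ℝ)-sig) := Real.rpow_pos_of_pos hn0 _
      linarith
    have h4s : (0:ℝ) < 4*(s:ℝ) := by linarith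
    have hC3' : (4*(s:ℝ))^M ≤ ((n^(ψ/2)))^T := by
      have g1 : 4*(s:ℝ) ≤ n^(3:ℕ) := by
        have : (n:ℝ)^(3:ℕ) = n*n*n := by ring
        rw [this]
        nlinarith
      calc (4*(s:ℝ))^M ≤ (n^(3:ℕ))^M := pow_le_pow_left₀ (by linarith) g1 M
        _ = n^(3*M) := by rw [← pow_mul]
        _ ≤ (n^(ψ/2))^T := by
            rw [← Real.rpow_natCast n (3*M), ← Real.rpow_natCast (n^(ψ/2)) T,
              ← Real.rpow_mul (le_of_lt hn0)]
            apply Real.rpow_le_rpow_of_exponent_le hn1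
            have hTge : (8*(M:ℝ))/ψ ≤ (T:ℝ) := by
              calc (8*(M:ℝ))/ψ ≤ (⌈(8*(M:ℝ))/ψ⌉₊ : ℝ) := Nat.le_ceil _
                _ ≤ (T:ℝ) := by rw [hTdef]; push_cast; linarith
            have g2 := mul_le_mul_of_nonneg_left hTge (le_of_lt (half_pos hψ0))
            have g3 : ψ/2 * ((8*(M:ℝ))/ψ) = 4*M := by field_simp; ring
            have g4 : ((3*M:ℕ):ℝ) = 3*(M:ℝ) := by push_cast; ring
            have g5 : (0:ℝ) ≤ (M:ℝ) := Nat.cast_nonneg _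
            rw [g4]
            linarith
    have hΦtop : Stmt8.Phi G I₀ B ≤
        (1/(4*(s:ℝ)))^(I₀.offDiag.card) * ((n:ℝ)^(ψ/2))^T := by
      have hPhi1 : Stmt8.Phi G I₀ B ≤ 1 := by
        apply Finset.prod_le_one
        · intro p hp; positivity
        · intro p hp
          rcases Finset.mem_offDiag.mp hp with ⟨hp1, hp2, hpne⟩
          rw [div_le_one (hBpos p.2 hp2)]
          exact_mod_cast Stmt8.maxDegFrom_le G (B p.1) (B p.2)
      have h1 : (1:ℝ) ≤ (1/(4*(s:ℝ)))^M * (n^(ψ/2))^T := by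
        have e0 : (1:ℝ) = (1/(4*(s:ℝ)))^M * (4*(s:ℝ))^M := by
          rw [← mul_pow, one_div, inv_mul_cancel₀ (ne_of_gt h4s), one_pow]
        calc (1:ℝ) = (1/(4*(s:ℝ)))^M * (4*(s:ℝ))^M := e0
          _ ≤ (1/(4*(s:ℝ)))^M * (n^(ψ/2))^T := mul_le_mul_of_nonneg_left hC3' (by positivity)
      rw [hMeq]
      exact le_trans hPhi1 h1
    have hstep : (1:ℝ) ≤ (n:ℝ)^(ψ/2) * α ^ (I₀.offDiag.card + 1) := by
      rw [hMeq]
      have e0 : (1:ℝ) = (α⁻¹)^(M+1) * α^(M+1) := by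
        rw [← mul_pow, inv_mul_cancel₀ (ne_of_gt hα0), one_pow]
      calc (1:ℝ) = (α⁻¹)^(M+1) * α^(M+1) := e0
        _ ≤ n^(ψ/2) * α^(M+1) := mul_le_mul_of_nonneg_right hC4' (by positivity)
    obtain ⟨C, hCprop, hCres⟩ := Stmt8.descent_aux G hNoBig hcard1 I₀ B hdisB hα0 hα1 hψ0
      hstep T B (fun i _ => subset_rfl) (by
        intro i hi
        rw [← hndef, ← hsdef]
        exact hsize_top i hi) (by rw [← hndef, ← hsdef]; exact hΦtop)
    -- basic facts about the refined blockade C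
    have hCsub : ∀ i ∈ I₀, C i ⊆ B i := fun i hi => (hCprop i hi).1
    have hCsz : ∀ i ∈ I₀, α^T * ((B i).ncard:ℝ) ≤ ((C i).ncard:ℝ) :=
      fun i hi => (hCprop i hi).2
    have hCge : ∀ i ∈ I₀, 2*(s:ℝ)+2 ≤ ((C i).ncard:ℝ) :=
      fun i hi => le_trans (hsize_top i hi) (hCsz i hi)
    have hCpos : ∀ i ∈ I₀, (0:ℝ) < ((C i).ncard:ℝ) :=
      fun i hi => lt_of_lt_of_le (by linarith) (hCge i hi)
    have hCdis : ∀ a ∈ I₀, ∀ b ∈ I₀, a ≠ b → Disjoint (C a) (C b) := fun a ha b hb hne =>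
      (hdisB a ha b hb hne).mono (hCsub a ha) (hCsub b hb)
    have hCwidth : ∀ i ∈ I₀, n^((1:ℝ)-Sig) ≤ ((C i).ncard:ℝ) := by
      intro i hi
      have e1 : (1:ℝ) ≤ α^T * n^(Sig-sig) := by
        calc (1:ℝ) = α^T*(α⁻¹)^T := hcanc.symm
          _ ≤ α^T * n^(Sig-sig) := mul_le_mul_of_nonneg_left hC5' (pow_nonneg (le_of_lt hα0) T)
      have e2 : n^((1:ℝ)-Sig) * n^(Sig-sig) = n^((1:ℝ)-sig) := by
        rw [← Real.rpow_add hn0]; ring_nf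
      have e5 := mul_le_mul_of_nonneg_left (hwidth i (hI₀sub hi)) (pow_nonneg (le_of_lt hα0) T)
      calc n^((1:ℝ)-Sig) = n^((1:ℝ)-Sig) * 1 := (mul_one _).symm
        _ ≤ n^((1:ℝ)-Sig) * (α^T * n^(Sig-sig)) :=
            mul_le_mul_of_nonneg_left e1 (Real.rpow_nonneg (le_of_lt hn0) _)
        _ = α^T * (n^((1:ℝ)-Sig) * n^(Sig-sig)) := by ring
        _ = α^T * n^((1:ℝ)-sig) := by rw [e2]
        _ ≤ α^T * ((B i).ncard:ℝ) := e5
        _ ≤ ((C i).ncard:ℝ) := hCsz i hi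
    set rho : ℤ → ℤ → ℝ :=
      fun a b => (maxDegFrom G (C a) (C b) : ℝ) / ((C b).ncard : ℝ) with hrhodef
    have hrho_lb : ∀ a ∈ I₀, ∀ b ∈ I₀, a ≠ b → 1/(2*(s:ℝ)) ≤ rho a b := by
      intro a ha b hb hne
      have h0 := Stmt8.ratio_lb G hNoBig (hCdis a ha b hb hne) hcard1
        (by rw [hsdef, hndef] at hCge; exact hCge a ha)
        (by rw [hsdef, hndef] at hCge; exact hCge b hb)
      rw [← hndef, ← hsdef] at h0
      exact h0
    have hrho_ub : ∀ a : ℤ, ∀ b ∈ I₀, rho a b ≤ 1 := by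
      intro a b hb
      rw [hrhodef]
      rw [div_le_one (hCpos b hb)]
      exact_mod_cast Stmt8.maxDegFrom_le G (C a) (C b)
    have hrho_nonneg : ∀ a b : ℤ, 0 ≤ rho a b := by
      intro a b
      rw [hrhodef]
      positivity
    have hspos : (0:ℝ) < 1/(2*(s:ℝ)) := by positivity
    have hβ1 : (1:ℝ) ≤ n^ψ := by
      have h0 := Real.rpow_le_rpow_of_exponent_le hn1 (le_of_lt hψ0)
      rwa [Real.rpow_zero] at h0
    have h2β1 : (1:ℝ) ≤ 2*n^ψ := by linarith
    have hβpow : ∀ x : ℝ, 1/(2*(s:ℝ)) ≤ x → 1 < (n^ψ)^(Scl+1) * x := by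
      intro x hx
      have hb : (n:ℝ)^(2:ℝ) ≤ (n^ψ)^(Scl+1) := by
        rw [← Real.rpow_natCast (n^ψ) (Scl+1), ← Real.rpow_mul (le_of_lt hn0)]
        apply Real.rpow_le_rpow_of_exponent_le hn1
        have h2ψ : 2/ψ ≤ (⌈2/ψ⌉₊:ℝ) := Nat.le_ceil _
        have hcast : (((Scl+1:ℕ)):ℝ) = (⌈2/ψ⌉₊:ℝ) + 2 := by rw [hScldef]; push_cast; ring
        rw [hcast]
        have h6 := mul_le_mul_of_nonneg_left h2ψ (le_of_lt hψ0)
        have e : ψ*(2/ψ) = 2 := by field_simp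
        nlinarith
      have hx0 : (0:ℝ) < x := lt_of_lt_of_le hspos hx
      have hn2 : n^(2:ℝ) = n*n := by
        rw [show (2:ℝ) = ((2:ℕ):ℝ) by norm_num, Real.rpow_natCast]; ring
      have h2s : 2*(s:ℝ) < n^(2:ℝ) := by rw [hn2]; nlinarith
      calc (1:ℝ) = (2*(s:ℝ)) * (1/(2*(s:ℝ))) := by field_simp
        _ < n^(2:ℝ) * x := by
            have m1 : n^(2:ℝ) * (1/(2*(s:ℝ))) ≤ n^(2:ℝ) * x :=
              mul_le_mul_of_nonneg_left hx (by positivity)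
            have m2 : (2*(s:ℝ)) * (1/(2*(s:ℝ))) < n^(2:ℝ) * (1/(2*(s:ℝ))) :=
              mul_lt_mul_of_pos_right h2s hspos
            linarith
        _ ≤ (n^ψ)^(Scl+1) * x := mul_le_mul_of_nonneg_right hb (le_of_lt hx0)
    -- Ramsey selection
    have hsym : ∀ a b : ℤ, Stmt8.cl (n^ψ) Scl (rho (min a b) (max a b))
        = Stmt8.cl (n^ψ) Scl (rho (min b a) (max b a)) := by
      intro a b
      rw [min_comm a b, max_comm a b]
    have hcol : ∀ a ∈ I₀, ∀ b ∈ I₀,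
        Stmt8.cl (n^ψ) Scl (rho (min a b) (max a b)) < r := by
      intro a _ b _
      rw [hrdef]
      exact Nat.lt_succ_of_le (Stmt8.cl_le _ _ _)
    have hRcard : (r+1)^(r*(k-1)+1) ≤ I₀.card := by
      rw [hI₀card, hKdef]; exact le_max_left _ _
    obtain ⟨I', hI'I₀, hI'card, tcol, hmono⟩ := Stmt8.monoRamsey r k
      (by rw [hrdef]; exact Nat.succ_pos _) (by omega)
      (fun a b => Stmt8.cl (n^ψ) Scl (rho (min a b) (max a b))) hsym I₀ hcol hRcard
    have hI'I : I' ⊆ I := subset_trans hI'I₀ hI₀sub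
    -- tau : the maximum ratio over selected pairs
    have hone_lt : 1 < I'.card := by omega
    obtain ⟨a₀, ha₀, b₀, hb₀, hab₀⟩ := Finset.one_lt_card.mp hone_lt
    have hp₀ : (a₀, b₀) ∈ I'.offDiag := Finset.mem_offDiag.mpr ⟨ha₀, hb₀, hab₀⟩
    have hoffne : I'.offDiag.Nonempty := ⟨_, hp₀⟩
    set tau : ℝ := I'.offDiag.sup' hoffne (fun p => rho p.1 p.2) with htaudef
    have htau_ge : ∀ a ∈ I', ∀ b ∈ I', a ≠ b → rho a b ≤ tau := by
      intro a ha b hb hne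
      exact Finset.le_sup' (fun (p : ℤ × ℤ) => rho p.1 p.2)
        (show (a,b) ∈ I'.offDiag from Finset.mem_offDiag.mpr ⟨ha, hb, hne⟩)
    obtain ⟨q, hq, htau_eq⟩ : ∃ q ∈ I'.offDiag, rho q.1 q.2 = tau := by
      obtain ⟨q, hq, he⟩ := Finset.exists_mem_eq_sup' hoffne (fun p => rho p.1 p.2)
      exact ⟨q, hq, he.symm⟩
    obtain ⟨hq1, hq2, hqne⟩ := Finset.mem_offDiag.mp hq
    have htaupos : (0:ℝ) < tau :=
      lt_of_lt_of_le hspos (htau_eq ▸ hrho_lb q.1 (hI'I₀ hq1) q.2 (hI'I₀ hq2) hqne)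
    have htauLam : tau ≤ Lam := by
      rw [← htau_eq, hrhodef]
      rw [div_le_iff₀ (hCpos q.2 (hI'I₀ hq2))]
      have l1 : (maxDegFrom G (C q.1) (C q.2) : ℝ) ≤ (maxDegFrom G (B q.1) (B q.2) : ℝ) := by
        exact_mod_cast Stmt8.maxDegFrom_mono G (hCsub q.1 (hI'I₀ hq1)) (hCsub q.2 (hI'I₀ hq2))
      have l2 := hLink q.1 (hI'I hq1) q.2 (hI'I hq2) hqne
      have l3 : Lam*α^T * ((B q.2).ncard:ℝ) ≤ Lam * ((C q.2).ncard:ℝ) := by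
        have l4 := hCsz q.2 (hI'I₀ hq2)
        calc Lam*α^T * ((B q.2).ncard:ℝ) = Lam * (α^T * ((B q.2).ncard:ℝ)) := by ring
          _ ≤ Lam * ((C q.2).ncard:ℝ) := mul_le_mul_of_nonneg_left l4 (le_of_lt hLam0)
      linarith
    -- swapping and class-comparison bounds
    have hswap : ∀ a ∈ I₀, ∀ b ∈ I₀, a ≠ b → rho b a ≤ 2*n^ψ * rho a b := by
      intro a ha b hb hne
      have h1 := Stmt8.asym G I₀ C hcard1 hCres hα0 hα2 ha hb hne (hCpos b hb)
      rw [← hndef] at h1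
      rw [hrhodef]
      rw [← mul_div_assoc, div_le_div_iff₀ (hCpos a ha) (hCpos b hb)]
      linarith
    -- min/max helpers
    have hminmax : ∀ a ∈ I', ∀ b ∈ I', a ≠ b →
        min a b ∈ I' ∧ max a b ∈ I' ∧ min a b ≠ max a b := by
      intro a ha b hb hne
      refine ⟨?_, ?_, ne_of_lt (min_lt_max.mpr hne)⟩
      · rcases min_choice a b with h1 | h1 <;> rw [h1] <;> assumption
      · rcases max_choice a b with h1 | h1 <;> rw [h1] <;> assumption
    have hclass : ∀ a ∈ I', ∀ b ∈ I', a ≠ b → ∀ u ∈ I', ∀ v ∈ I', u ≠ v →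
        rho (min a b) (max a b) ≤ n^ψ * rho (min u v) (max u v) := by
      intro a ha b hb hab u hu v hv huv
      obtain ⟨hma, hxa, hnea⟩ := hminmax a ha b hb hab
      obtain ⟨hmu, hxu, hneu⟩ := hminmax u hu v hv huv
      have e1 : Stmt8.cl (n^ψ) Scl (rho (min a b) (max a b))
          = Stmt8.cl (n^ψ) Scl (rho (min u v) (max u v)) :=
        (hmono a ha b hb hab).trans (hmono u hu v hv huv).symm
      exact Stmt8.cl_compare hβ1
        (hrho_ub _ _ (hI'I₀ hxa)) (hrho_ub _ _ (hI'I₀ hxu))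
        (hβpow _ (hrho_lb _ (hI'I₀ hma) _ (hI'I₀ hxa) hnea))
        (hβpow _ (hrho_lb _ (hI'I₀ hmu) _ (hI'I₀ hxu) hneu)) e1
    have hψnn : (0:ℝ) ≤ n^ψ := by linarith
    have hkey : ∀ h ∈ I', ∀ j ∈ I', h ≠ j → tau ≤ 4*(n^ψ*(n^ψ*n^ψ)) * rho h j := by
      intro h hh j hj hne
      have s1 : rho q.1 q.2 ≤ 2*n^ψ * rho (min q.1 q.2) (max q.1 q.2) := by
        rcases le_total q.1 q.2 with hle | hle
        · rw [min_eq_left hle, max_eq_right hle]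
          have := mul_le_mul_of_nonneg_left h2β1 (hrho_nonneg q.1 q.2)
          linarith
        · rw [min_eq_right hle, max_eq_left hle]
          exact hswap q.2 (hI'I₀ hq2) q.1 (hI'I₀ hq1) (Ne.symm hqne)
      have s2 : rho (min q.1 q.2) (max q.1 q.2) ≤ n^ψ * rho (min h j) (max h j) :=
        hclass q.1 hq1 q.2 hq2 hqne h hh j hj hne
      have s3 : rho (min h j) (max h j) ≤ 2*n^ψ * rho h j := by
        rcases le_total h j with hle | hle
        · rw [min_eq_left hle, max_eq_right hle]
          have := mul_le_mul_of_nonneg_left h2β1 (hrho_nonneg h j)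
          linarith
        · rw [min_eq_right hle, max_eq_left hle]
          exact hswap h (hI'I₀ hh) j (hI'I₀ hj) hne
      calc tau = rho q.1 q.2 := htau_eq.symm
        _ ≤ 2*n^ψ * rho (min q.1 q.2) (max q.1 q.2) := s1
        _ ≤ 2*n^ψ * (n^ψ * rho (min h j) (max h j)) :=
            mul_le_mul_of_nonneg_left s2 (by linarith)
        _ ≤ 2*n^ψ * (n^ψ * (2*n^ψ * rho h j)) :=
            mul_le_mul_of_nonneg_left (mul_le_mul_of_nonneg_left s3 hψnn) (by linarith)
        _ = 4*(n^ψ*(n^ψ*n^ψ)) * rho h j := by ring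
    have hnum : 4*(n^ψ*(n^ψ*n^ψ)) * n^(-phi) ≤ n^(-ψ) := by
      have e1 : n^ψ*(n^ψ*n^ψ) * n^(-phi) = n^(3*ψ-phi) := by
        rw [← Real.rpow_add hn0, ← Real.rpow_add hn0, ← Real.rpow_add hn0]
        congr 1
        ring
      have e2 : n^(phi/2) * n^(3*ψ-phi) = n^(-ψ) := by
        rw [← Real.rpow_add hn0]
        congr 1
        rw [hψdef]; ring
      calc 4*(n^ψ*(n^ψ*n^ψ)) * n^(-phi) = 4*(n^ψ*(n^ψ*n^ψ) * n^(-phi)) := by ring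
        _ = 4*n^(3*ψ-phi) := by rw [e1]
        _ ≤ n^(phi/2)*n^(3*ψ-phi) :=
            mul_le_mul_of_nonneg_right hC6' (Real.rpow_nonneg (le_of_lt hn0) _)
        _ = n^(-ψ) := e2
    refine ⟨I', hI'I, hI'card, C, ?_, ⟨?_, ?_⟩, tau, htaupos, htauLam, ?_⟩
    · intro i hi
      refine ⟨hCsub i (hI'I₀ hi), ?_⟩
      apply Set.nonempty_of_ncard_ne_zero
      intro h0
      have hp := hCpos i (hI'I₀ hi)
      rw [h0] at hp
      simp at hp
    · intro i hi
      have hw := hCwidth i (hI'I₀ hi)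
      rw [hndef] at hw
      exact hw
    · have hw : n^((1:ℝ)-Sig) ≤ n := by
        calc n^((1:ℝ)-Sig) ≤ n^((1:ℝ)) := Real.rpow_le_rpow_of_exponent_le hn1 (by linarith)
          _ = n := Real.rpow_one n
      rw [hndef] at hw
      exact hw
    · intro h hh j hj hne
      constructor
      · have h1 := htau_ge h hh j hj hne
        rw [hrhodef, div_le_iff₀ (hCpos j (hI'I₀ hj))] at h1
        exact h1
      · intro X hX Y hY hXc hYc
        have hcn : (0:ℝ) ≤ ((C h).ncard:ℝ) := Nat.cast_nonneg _
        have hcn2 : (0:ℝ) ≤ ((C j).ncard:ℝ) := Nat.cast_nonneg _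
        have hαX : α * ((C h).ncard:ℝ) ≤ (X.ncard:ℝ) :=
          le_trans (mul_le_mul_of_nonneg_right hαμ hcn) hXc
        have hαY : α * ((C j).ncard:ℝ) ≤ (Y.ncard:ℝ) :=
          le_trans (mul_le_mul_of_nonneg_right hαμ hcn2) hYc
        have hres' := hCres h (hI'I₀ hh) j (hI'I₀ hj) hne X hX Y hY hαX hαY
        have f1 : rho h j * ((C j).ncard:ℝ) = (maxDegFrom G (C h) (C j):ℝ) := by
          rw [hrhodef]
          exact div_mul_cancel₀ _ (ne_of_gt (hCpos j (hI'I₀ hj)))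
        have hkey' := hkey h hh j hj hne
        have hchain : tau * ((Fintype.card V:ℝ))^(-phi) * ((C j).ncard:ℝ)
            ≤ (maxDegFrom G (C h) (C j):ℝ) * ((Fintype.card V:ℝ))^(-ψ) := by
          rw [← hndef]
          have w1 : tau * n^(-phi) * ((C j).ncard:ℝ)
              ≤ (4*(n^ψ*(n^ψ*n^ψ)) * rho h j) * n^(-phi) * ((C j).ncard:ℝ) := by
            apply mul_le_mul_of_nonneg_right _ hcn2
            exact mul_le_mul_of_nonneg_right hkey' (Real.rpow_nonneg (le_of_lt hn0) _)
          calc tau * n^(-phi) * ((C j).ncard:ℝ)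
              ≤ (4*(n^ψ*(n^ψ*n^ψ)) * rho h j) * n^(-phi) * ((C j).ncard:ℝ) := w1
            _ = (4*(n^ψ*(n^ψ*n^ψ)) * n^(-phi)) * (rho h j * ((C j).ncard:ℝ)) := by ring
            _ = (4*(n^ψ*(n^ψ*n^ψ)) * n^(-phi)) * (maxDegFrom G (C h) (C j):ℝ) := by rw [f1]
            _ ≤ n^(-ψ) * (maxDegFrom G (C h) (C j):ℝ) :=
                mul_le_mul_of_nonneg_right hnum (Nat.cast_nonneg _)
            _ = (maxDegFrom G (C h) (C j):ℝ) * n^(-ψ) := by ring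
        exact lt_of_le_of_lt hchain hres'
end
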